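/- arXiv:1511.00452 — 4 statements merged into one kernel-verified Lean document; each statement's English description precedes it below -/
import Mathlib

section
/- For every profile q̄ ∈ P(M)^W of preference lists for the women over the men, the M-optimal stable matching rule C^q̄ is strategy-proof (i.e., strategy-proof for every man m ∈ M). -/
/-- A preference list over `α` (a totally ordered subset of `α`), represented as a
duplicate-free list, most-preferred member first. Members of `α` not on the list
are unranked (unacceptable). -/
abbrev PrefList (α : Type) : Type := {l : List α // l.Nodup}

/-- `x ≻ y` according to `p`: `x` is ranked above `y` on `p`, or `x` appears on `p`
while `y` does not. -/
def prefers {α : Type} (p : PrefList α) (x y : α) : Prop :=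
  [x, y].Sublist p.val ∨ (x ∈ p.val ∧ y ∉ p.val)

/-- Strict preference over possible outcomes, where `none` means being unmatched:
being matched to someone on one's list is better than being unmatched, which is
better than being matched to someone not on one's list. -/
def outPrefers {α : Type} (p : PrefList α) : Option α → Option α → Prop
  | some x, some y => prefers p x y
  | some x, none => x ∈ p.val
  | none, some y => y ∉ p.val
  | none, none => False

/-- A preference list is full if it ranks every member of the opposite side. -/
def IsFull {α : Type} (p : PrefList α) : Prop := ∀ x : α, x ∈ p.val

/-- A matching between `M` and `W`: a one-to-one mapping between a subset of `M`
and a subset of `W`, recorded as a partial injective function from men to women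
(`μ.toFun m = none` meaning that `m` is unmatched). -/
structure Matching (M W : Type) where
  toFun : M → Option W
  inj : ∀ ⦃m m' : M⦄ ⦃w : W⦄, toFun m = some w → toFun m' = some w → m = m'

/-- Woman `w` strictly prefers man `m` (according to her list `q`) over the partner
matched to her by `μ` (or over remaining unmatched, if `μ` leaves her unmatched). -/
def womanPrefersOver {M W : Type} (q : PrefList M) (μ : Matching M W) (w : W) (m : M) : Prop :=
  (∃ m', μ.toFun m' = some w ∧ prefers q m m') ∨
    ((∀ m', μ.toFun m' ≠ some w) ∧ m ∈ q.val)

/-- `μ` is stable with respect to men's profile `pbar` and women's profile `qbar`: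
there is no man and woman each preferring the other over their match under `μ`, and
no participant is matched with a partner not on their preference list. -/
def IsStable {M W : Type} (pbar : M → PrefList W) (qbar : W → PrefList M)
    (μ : Matching M W) : Prop :=
  ¬ ((∃ m w, outPrefers (pbar m) (some w) (μ.toFun m) ∧ womanPrefersOver (qbar w) μ w m) ∨
     (∃ m w, μ.toFun m = some w ∧ (w ∉ (pbar m).val ∨ m ∉ (qbar w).val)))

/-- `C` is `qbar`-stable: `C pbar` is stable with respect to `pbar` and `qbar` for
every men's profile `pbar`. -/
def IsStableRule {M W : Type} (qbar : W → PrefList M)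
    (C : (M → PrefList W) → Matching M W) : Prop :=
  ∀ pbar, IsStable pbar qbar (C pbar)

/-- `C` is the `M`-optimal stable matching rule `C^qbar`: it maps each men's profile
`pbar` to a stable matching that every man weakly prefers to every stable matching. -/
def IsMOptimalStableRule {M W : Type} (qbar : W → PrefList M)
    (C : (M → PrefList W) → Matching M W) : Prop :=
  ∀ pbar, IsStable pbar qbar (C pbar) ∧
    ∀ μ, IsStable pbar qbar μ → ∀ m, ¬ outPrefers (pbar m) (μ.toFun m) ((C pbar).toFun m)

/-- `C` is strategy-proof for man `m`. -/
def StrategyProofFor {M W : Type} [DecidableEq M]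
    (C : (M → PrefList W) → Matching M W) (m : M) : Prop :=
  ∀ (pbar : M → PrefList W) (p' : PrefList W),
    ¬ outPrefers (pbar m) ((C (Function.update pbar m p')).toFun m) ((C pbar).toFun m)

/-- A women's profile `qbar` is cyclical if there are men `a`, `b`, `c` and women
`x`, `y` with `a ≻ₓ b ≻ₓ c ≻_y a`. -/
def Cyclical {M W : Type} (qbar : W → PrefList M) : Prop :=
  ∃ (a b c : M) (x y : W),
    prefers (qbar x) a b ∧ prefers (qbar x) b c ∧ prefers (qbar y) c a

/-- A one-side-querying extensive-form matching mechanism for `M` over `W`: a rooted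
tree each of whose leaves is labeled by a matching and each of whose internal nodes
queries a man; the edges out of an internal node querying `q` are the fibers of the
function `next` (two preference lists for `q` lie on the same outgoing edge iff they
are routed to the same subtree). -/
inductive Mech (M W : Type) : Type
  | leaf (μ : Matching M W)
  | node (q : M) (next : PrefList W → Mech M W)

/-- The matching rule implemented by a mechanism: route the profile from the root to
a leaf and output that leaf's matching. -/
def Mech.run {M W : Type} : Mech M W → (M → PrefList W) → Matching M W
  | .leaf μ, _ => μ
  | .node q next, pbar => (next (pbar q)).run pbar

/-- Auxiliary definition of obvious strategy-proofness for man `m`: `P` is the set of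
profiles passing through the current node. At each node querying `m`, for all profiles
`pbar`, `pbar'` passing through the node at which `m`'s lists diverge (are routed to
distinct subtrees), the outcome of `pbar'` is not strictly preferred (according to
`pbar m`) to the outcome of `pbar`. -/
def Mech.OSPAux {M W : Type} (m : M) : Mech M W → Set (M → PrefList W) → Prop
  | .leaf _, _ => True
  | .node q next, P =>
      (q = m → ∀ pbar ∈ P, ∀ pbar' ∈ P, next (pbar m) ≠ next (pbar' m) →
        ¬ outPrefers (pbar m) (((next (pbar' m)).run pbar').toFun m)
            (((next (pbar m)).run pbar).toFun m)) ∧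
      ∀ p : PrefList W, Mech.OSPAux m (next p) {pbar ∈ P | next (pbar q) = next p}

/-- `I` is obviously strategy-proof (OSP) for man `m`. -/
def Mech.OSPFor {M W : Type} (I : Mech M W) (m : M) : Prop :=
  Mech.OSPAux m I Set.univ

/-- A matching rule is OSP-implementable if it is implemented by some mechanism that
is OSP for every man. -/
def OSPImplementable {M W : Type} (C : (M → PrefList W) → Matching M W) : Prop :=
  ∃ I : Mech M W, (∀ m : M, I.OSPFor m) ∧ ∀ pbar, I.run pbar = C pbar

/-- A two-sides-querying extensive-form matching mechanism: internal nodes may query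
either a man (about his preference list over `W`) or a woman (about her preference
list over `M`). -/
inductive Mech2 (M W : Type) : Type
  | leaf (μ : Matching M W)
  | nodeM (q : M) (next : PrefList W → Mech2 M W)
  | nodeW (q : W) (next : PrefList M → Mech2 M W)

/-- The two-sides-querying matching rule implemented by a two-sides-querying mechanism. -/
def Mech2.run {M W : Type} :
    Mech2 M W → (M → PrefList W) → (W → PrefList M) → Matching M W
  | .leaf μ, _, _ => μ
  | .nodeM q next, pbar, qbar => (next (pbar q)).run pbar qbar
  | .nodeW q next, pbar, qbar => (next (qbar q)).run pbar qbar

/-- Auxiliary definition of obvious strategy-proofness of a two-sides-querying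
mechanism for man `m`; `P` is the set of two-sided profiles passing through the
current node. -/
def Mech2.OSPAux {M W : Type} (m : M) :
    Mech2 M W → Set ((M → PrefList W) × (W → PrefList M)) → Prop
  | .leaf _, _ => True
  | .nodeM q next, P =>
      (q = m → ∀ r ∈ P, ∀ r' ∈ P, next (r.1 m) ≠ next (r'.1 m) →
        ¬ outPrefers (r.1 m) (((next (r'.1 m)).run r'.1 r'.2).toFun m)
            (((next (r.1 m)).run r.1 r.2).toFun m)) ∧
      ∀ p : PrefList W, Mech2.OSPAux m (next p) {r ∈ P | next (r.1 q) = next p}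
  | .nodeW q next, P =>
      ∀ p : PrefList M, Mech2.OSPAux m (next p) {r ∈ P | next (r.2 q) = next p}

/-- A two-sides-querying mechanism `I` is obviously strategy-proof (OSP) for man `m`. -/
def Mech2.OSPForM {M W : Type} (I : Mech2 M W) (m : M) : Prop :=
  Mech2.OSPAux m I Set.univ

set_option linter.unusedSectionVars false

namespace SPAux

open List

variable {α : Type} [DecidableEq α]

/-- rank of an element in a list: its index if present, else `length + 1`. -/
def rk (l : List α) (x : α) : ℕ := if x ∈ l then l.idxOf x else l.length + 1

/-- rank of an outcome. -/
def ork (l : List α) : Option α → ℕ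
  | some x => rk l x
  | none => l.length

lemma pair_sublist_iff {l : List α} (hl : l.Nodup) {x y : α} :
    [x, y].Sublist l ↔ x ∈ l ∧ y ∈ l ∧ l.idxOf x < l.idxOf y := by
  induction l with
  | nil => simp
  | cons a t ih =>
    have hna : a ∉ t := (List.nodup_cons.mp hl).1
    have ht : t.Nodup := (List.nodup_cons.mp hl).2
    rw [List.sublist_cons_iff]
    constructor
    · rintro (h | ⟨r, hr, hrt⟩)
      · rcases (ih ht).mp h with ⟨hx, hy, hlt⟩
        have hxa : x ≠ a := fun e => hna (e ▸ hx)
        have hya : y ≠ a := fun e => hna (e ▸ hy)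
        refine ⟨mem_cons_of_mem _ hx, mem_cons_of_mem _ hy, ?_⟩
        rw [List.idxOf_cons_ne _ (Ne.symm hxa), List.idxOf_cons_ne _ (Ne.symm hya)]
        omega
      · obtain ⟨hxa, hry⟩ := List.cons_eq_cons.mp hr
        have hyt : y ∈ t := by
          apply List.singleton_sublist.mp
          rw [hry]; exact hrt
        have hya : y ≠ a := fun e => hna (e ▸ hyt)
        subst hxa
        refine ⟨List.mem_cons_self, mem_cons_of_mem _ hyt, ?_⟩
        rw [List.idxOf_cons_self, List.idxOf_cons_ne _ (Ne.symm hya)]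
        omega
    · rintro ⟨hx, hy, hlt⟩
      by_cases hxa : x = a
      · subst hxa
        have hya : y ≠ x := by
          intro e; subst e; omega
        have hyt : y ∈ t := by
          rcases List.mem_cons.mp hy with e | h
          · exact absurd e hya
          · exact h
        exact Or.inr ⟨[y], rfl, List.singleton_sublist.mpr hyt⟩
      · have hxt : x ∈ t := by
          rcases List.mem_cons.mp hx with e | h
          · exact absurd e hxa
          · exact h
        have hya : y ≠ a := by
          intro e; subst e
          rw [List.idxOf_cons_self, List.idxOf_cons_ne _ (Ne.symm hxa)] at hlt
          omega
        have hyt : y ∈ t := by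
          rcases List.mem_cons.mp hy with e | h
          · exact absurd e hya
          · exact h
        rw [List.idxOf_cons_ne _ (Ne.symm hxa), List.idxOf_cons_ne _ (Ne.symm hya)] at hlt
        exact Or.inl ((ih ht).mpr ⟨hxt, hyt, by omega⟩)

lemma rk_lt_length_iff {l : List α} {x : α} : rk l x < l.length ↔ x ∈ l := by
  unfold rk
  by_cases h : x ∈ l
  · simp [h, List.idxOf_lt_length_iff.mpr h]
  · simp [h]

lemma rk_inj {l : List α} {x y : α} (hx : x ∈ l) (h : rk l x = rk l y) : x = y := by
  have hidx : l.idxOf x < l.length := List.idxOf_lt_length_iff.mpr hx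
  by_cases hy : y ∈ l
  · rw [rk, rk, if_pos hx, if_pos hy] at h
    exact (List.idxOf_inj hx).mp h
  · rw [rk, rk, if_pos hx, if_neg hy] at h
    omega

lemma prefers_iff (p : PrefList α) {x y : α} :
    prefers p x y ↔ x ∈ p.val ∧ rk p.val x < rk p.val y := by
  unfold prefers
  rw [pair_sublist_iff p.prop]
  by_cases hx : x ∈ p.val
  · by_cases hy : y ∈ p.val
    · rw [rk, rk, if_pos hx, if_pos hy]
      simp [hx, hy]
    · have : p.val.idxOf x < p.val.length := List.idxOf_lt_length_iff.mpr hx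
      rw [rk, rk, if_pos hx, if_neg hy]
      simp [hx, hy]; omega
  · simp [hx]

lemma outPrefers_iff (p : PrefList α) {o₁ o₂ : Option α} :
    outPrefers p o₁ o₂ ↔ ork p.val o₁ < ork p.val o₂ := by
  match o₁, o₂ with
  | some x, some y =>
    show prefers p x y ↔ _
    rw [prefers_iff]
    unfold ork
    constructor
    · rintro ⟨_, h⟩; exact h
    · intro h
      have h2 : rk p.val x < rk p.val y := h
      refine ⟨?_, h2⟩
      by_contra hx
      have hy : rk p.val y ≤ p.val.length + 1 := by
        unfold rk
        by_cases hy : y ∈ p.val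
        · have := List.idxOf_lt_length_iff.mpr hy; simp [hy]; omega
        · simp [hy]
      rw [show rk p.val x = p.val.length + 1 from by simp [rk, hx]] at h2
      omega
  | some x, none =>
    show x ∈ p.val ↔ _
    unfold ork
    rw [← rk_lt_length_iff]
  | none, some y =>
    show y ∉ p.val ↔ _
    by_cases hy : y ∈ p.val
    · have := List.idxOf_lt_length_iff.mpr hy
      simp only [ork, rk, if_pos hy]
      constructor
      · intro h; exact absurd hy h
      · intro h; omega
    · simp only [ork, rk, if_neg hy]
      constructor
      · intro _; omega
      · intro _; exact hy
  | none, none =>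
    show False ↔ _
    unfold ork; simp

lemma ork_le_length {l : List α} {o : Option α} (h : ∀ x, o = some x → x ∈ l) :
    ork l o ≤ l.length := by
  match o with
  | none => exact le_refl _
  | some x =>
    have := rk_lt_length_iff.mpr (h x rfl)
    exact le_of_lt this

lemma ork_inj {l : List α} {o₁ o₂ : Option α} {x : α} (hx : x ∈ l)
    (h1 : o₁ = some x) (h : ork l o₁ = ork l o₂) : o₂ = some x := by
  subst h1
  match o₂ with
  | none =>
    exfalso
    have := rk_lt_length_iff.mpr hx
    simp only [ork] at h; omega
  | some y =>
    simp only [ork] at h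
    exact congrArg some (rk_inj hx h).symm

/-- transitivity-flavoured facts will be done by `omega` after rewriting with the
rank characterizations. Totality of `prefers` on members: -/
lemma prefers_total (p : PrefList α) {x y : α} (hx : x ∈ p.val) (hy : y ∈ p.val)
    (hxy : x ≠ y) : prefers p x y ∨ prefers p y x := by
  rw [prefers_iff, prefers_iff]
  have : rk p.val x ≠ rk p.val y := fun h => hxy (rk_inj hx h)
  rcases lt_or_gt_of_ne this with h | h
  · exact Or.inl ⟨hx, h⟩
  · exact Or.inr ⟨hy, h⟩

lemma prefers_mem_left {p : PrefList α} {x y : α} (h : prefers p x y) : x ∈ p.val :=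
  ((prefers_iff p).mp h).1

lemma prefers_trans {p : PrefList α} {x y z : α} (h1 : prefers p x y) (h2 : prefers p y z) :
    prefers p x z := by
  rw [prefers_iff] at *
  exact ⟨h1.1, lt_trans h1.2 h2.2⟩

end SPAux
namespace SPAux

open List

variable {M W : Type} [Fintype M] [Fintype W] [DecidableEq M] [DecidableEq W]

lemma head?_cons {l : List W} {a : W} (h : l.head? = some a) : ∃ t, l = a :: t := by
  cases l with
  | nil => simp at h
  | cons x t => simp at h; exact ⟨t, by rw [h]⟩

lemma prefers_asymm {p : PrefList M} {x y : M} (h1 : prefers p x y) (h2 : prefers p y x) :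
    False := by
  rw [prefers_iff] at h1 h2; omega

/-- auxiliary pair-rank fact -/
lemma rk_lt_of_pair {l : List W} (hl : l.Nodup) {x y : W} (h : [x, y].Sublist l) :
    rk l x < rk l y := by
  rcases (pair_sublist_iff hl).mp h with ⟨hx, hy, hlt⟩
  rw [rk, rk, if_pos hx, if_pos hy]; exact hlt

lemma ork_cons {h : W} {tl : List W} {o : Option W} (ho : o ≠ some h) :
    ork (h :: tl) o = ork tl o + 1 := by
  match o with
  | none => simp [ork]
  | some y =>
    have hy : y ≠ h := fun e => ho (by rw [e])
    by_cases hmem : y ∈ tl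
    · simp [ork, rk, hmem, hy, List.idxOf_cons_ne _ (Ne.symm hy), Nat.succ_eq_add_one]
    · have : y ∉ h :: tl := by simp [hy, hmem]
      simp [ork, rk, hmem, this]

/-- A restatement of stability as individual rationality plus no blocking pair. -/
lemma isStable_iff {pbar : M → PrefList W} {qbar : W → PrefList M} {lam : Matching M W} :
    IsStable pbar qbar lam ↔
      (∀ a w, lam.toFun a = some w → w ∈ (pbar a).val ∧ a ∈ (qbar w).val) ∧
      (∀ a w, ¬ (outPrefers (pbar a) (some w) (lam.toFun a) ∧
        womanPrefersOver (qbar w) lam w a)) := by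
  unfold IsStable
  constructor
  · intro hst
    constructor
    · intro a w hm
      constructor
      · by_contra hc; exact hst (Or.inr ⟨a, w, hm, Or.inl hc⟩)
      · by_contra hc; exact hst (Or.inr ⟨a, w, hm, Or.inr hc⟩)
    · intro a w hc
      exact hst (Or.inl ⟨a, w, hc⟩)
  · rintro ⟨hIR, hNB⟩ (⟨a, w, hb⟩ | ⟨a, w, hm, hbad⟩)
    · exact hNB a w hb
    · rcases hbad with h | h
      · exact h (hIR a w hm).1
      · exact h (hIR a w hm).2

section Surgery

variable (qbar : W → PrefList M)

/-- `a`'s head can be deleted: either the head woman finds `a` unacceptable, or some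
other man whose current head is the same woman is preferred by her. -/
def Deletable (s : M → List W) (a : M) : Prop :=
  ∃ h tl, s a = h :: tl ∧ (a ∉ (qbar h).val ∨
    ∃ b, b ≠ a ∧ (s b).head? = some h ∧ b ∈ (qbar h).val ∧ prefers (qbar h) b a)

open Classical in
noncomputable def nextS (s : M → List W) : M → List W :=
  if h : ∃ a, Deletable qbar s a then Function.update s h.choose (s h.choose).tail else s

lemma nextS_spec (s : M → List W) :
    (nextS qbar s = s ∧ ¬ ∃ a, Deletable qbar s a) ∨
    ∃ a, Deletable qbar s a ∧ nextS qbar s = Function.update s a (s a).tail := by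
  classical
  unfold nextS
  by_cases h : ∃ a, Deletable qbar s a
  · exact Or.inr ⟨h.choose, h.choose_spec, by rw [dif_pos h]⟩
  · exact Or.inl ⟨by rw [dif_neg h], h⟩

lemma nextS_suffix (s : M → List W) (a : M) : nextS qbar s a <:+ s a := by
  rcases nextS_spec qbar s with ⟨he, _⟩ | ⟨a0, _, he⟩
  · rw [he]
  · rw [he]
    by_cases ha : a = a0
    · subst ha; rw [Function.update_self]; exact List.tail_suffix _
    · rw [Function.update_of_ne ha]

variable (pbar : M → PrefList W)

noncomputable def stepsS (t : ℕ) : M → List W := (nextS qbar)^[t] (fun a => (pbar a).val)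

lemma stepsS_zero : stepsS qbar pbar 0 = fun a => (pbar a).val := rfl

lemma stepsS_succ (t : ℕ) : stepsS qbar pbar (t + 1) = nextS qbar (stepsS qbar pbar t) :=
  Function.iterate_succ_apply' _ _ _

lemma stepsS_suffix {t t' : ℕ} (h : t ≤ t') (a : M) :
    stepsS qbar pbar t' a <:+ stepsS qbar pbar t a := by
  induction t' with
  | zero => cases Nat.le_zero.mp h; exact List.suffix_refl _
  | succ n ih =>
    rcases Nat.lt_or_ge t (n+1) with hlt | hge
    · have h1 : stepsS qbar pbar (n+1) a <:+ stepsS qbar pbar n a := by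
        rw [stepsS_succ]; exact nextS_suffix _ _ _
      exact h1.trans (ih (Nat.lt_succ_iff.mp hlt))
    · have : t = n + 1 := le_antisymm h hge
      subst this; exact List.suffix_refl _

lemma stepsS_suffix_p (t : ℕ) (a : M) : stepsS qbar pbar t a <:+ (pbar a).val :=
  stepsS_suffix qbar pbar (Nat.zero_le t) a

lemma stepsS_nodup (t : ℕ) (a : M) : (stepsS qbar pbar t a).Nodup :=
  ((stepsS_suffix_p qbar pbar t a).sublist).nodup (pbar a).prop

/-- The profile at time `t`. -/
noncomputable def profS (t : ℕ) : M → PrefList W :=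
  fun a => ⟨stepsS qbar pbar t a, stepsS_nodup qbar pbar t a⟩

lemma profS_zero : profS qbar pbar 0 = pbar := by
  funext a; exact Subtype.ext rfl

end Surgery

end SPAux
namespace SPAux

open List

variable {M W : Type} [Fintype M] [Fintype W] [DecidableEq M] [DecidableEq W]

lemma head_outPrefers (P : PrefList W) {h : W} (hh : P.val.head? = some h) {o : Option W}
    (ho : o ≠ some h) (hmem : ∀ w, o = some w → w ∈ P.val) :
    outPrefers P (some h) o := by
  obtain ⟨tb, htb⟩ := head?_cons hh
  rw [outPrefers_iff]
  have h0 : ork P.val (some h) = 0 := by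
    rw [htb]; simp [ork, rk, List.idxOf_cons_self]
  have h1 : 1 ≤ ork P.val o := by
    match o with
    | none =>
      show 1 ≤ P.val.length
      rw [htb]; simp
    | some y =>
      have : ork P.val (some y) = ork tb (some y) + 1 := by
        rw [htb]; exact ork_cons (fun e => ho (by rw [Option.some_inj.mp e]))
      omega
  omega

lemma wpo_transfer {q : PrefList M} {lam : Matching M W} {h : W} {a0 b : M}
    (hpref : prefers q b a0) (hbq : b ∈ q.val)
    (hwpo : womanPrefersOver q lam h a0) :
    lam.toFun b ≠ some h ∧ womanPrefersOver q lam h b := by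
  rcases hwpo with ⟨c', hc', hpc'⟩ | ⟨hnone, _⟩
  · constructor
    · intro he
      have : c' = b := lam.inj hc' he
      subst this
      exact prefers_asymm hpref hpc'
    · exact Or.inl ⟨c', hc', prefers_trans hpref hpc'⟩
  · exact ⟨hnone b, Or.inr ⟨hnone, hbq⟩⟩

variable (qbar : W → PrefList M)

lemma stable_nextS_iff (s : M → List W) (hnd : ∀ a, (s a).Nodup)
    (hnd' : ∀ a, (nextS qbar s a).Nodup) (lam : Matching M W) :
    IsStable (fun a => (⟨nextS qbar s a, hnd' a⟩ : PrefList W)) qbar lam ↔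
      IsStable (fun a => (⟨s a, hnd a⟩ : PrefList W)) qbar lam := by
  rcases nextS_spec qbar s with ⟨he, _⟩ | ⟨a0, hdel, he⟩
  · have heq : (fun a => (⟨nextS qbar s a, hnd' a⟩ : PrefList W)) =
        fun a => (⟨s a, hnd a⟩ : PrefList W) := by
      funext a; exact Subtype.ext (congrFun he a)
    rw [heq]
  · obtain ⟨h, tl, hsa, hjust⟩ := hdel
    have hnotin : h ∉ tl := by
      have hx := hnd a0; rw [hsa] at hx; exact (List.nodup_cons.mp hx).1
    have hs' : ∀ a, a ≠ a0 → nextS qbar s a = s a := fun a ha => by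
      rw [he, Function.update_of_ne ha]
    have hs'0 : nextS qbar s a0 = tl := by
      rw [he, Function.update_self, hsa, List.tail_cons]
    have ea : ((⟨nextS qbar s a0, hnd' a0⟩ : PrefList W)).val = tl := hs'0
    have eb : ((⟨s a0, hnd a0⟩ : PrefList W)).val = h :: tl := hsa
    constructor
    · -- next-stable → s-stable
      intro hst
      rw [isStable_iff] at hst ⊢
      obtain ⟨hIR, hNB⟩ := hst
      have hIRs : ∀ a w, lam.toFun a = some w → w ∈ s a ∧ a ∈ (qbar w).val := by
        intro a w hm
        obtain ⟨h1, h2⟩ := hIR a w hm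
        refine ⟨?_, h2⟩
        by_cases ha : a = a0
        · subst ha
          rw [ea] at h1
          rw [hsa]; exact List.mem_cons_of_mem _ h1
        · rwa [show ((⟨nextS qbar s a, hnd' a⟩ : PrefList W)).val = s a from hs' a ha] at h1
      have hlama0 : lam.toFun a0 ≠ some h := by
        intro hm
        have h1 := (hIR a0 h hm).1
        rw [ea] at h1
        exact hnotin h1
      refine ⟨hIRs, ?_⟩
      rintro a w ⟨hout, hwpo⟩
      by_cases ha : a = a0
      · subst ha
        by_cases hw : w = h
        · subst hw
          rcases hjust with hnq | ⟨b, hbne, hbh, hbq, hpref⟩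
          · apply hnq
            rcases hwpo with ⟨c', _, hp⟩ | ⟨_, hin⟩
            · exact prefers_mem_left hp
            · exact hin
          · obtain ⟨hbneh, hwpob⟩ := wpo_transfer hpref hbq hwpo
            refine hNB b w ⟨?_, hwpob⟩
            refine head_outPrefers _ ?_ hbneh ?_
            · show (nextS qbar s b).head? = some w
              rw [hs' b hbne]; exact hbh
            · intro w' hw'
              show w' ∈ nextS qbar s b
              rw [hs' b hbne]; exact (hIRs b w' hw').1
        · refine hNB _ w ⟨?_, hwpo⟩
          rw [outPrefers_iff] at hout ⊢
          rw [ea]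
          rw [eb, ork_cons (fun e => hw (Option.some_inj.mp e)), ork_cons hlama0] at hout
          omega
      · refine hNB a w ⟨?_, hwpo⟩
        rw [outPrefers_iff] at hout ⊢
        rw [show ((⟨nextS qbar s a, hnd' a⟩ : PrefList W)).val = s a from hs' a ha]
        exact hout
    · -- s-stable → next-stable
      intro hst
      rw [isStable_iff] at hst ⊢
      obtain ⟨hIR, hNB⟩ := hst
      have hlama0 : lam.toFun a0 ≠ some h := by
        intro hm
        rcases hjust with hnq | ⟨b, hbne, hbh, hbq, hpref⟩
        · exact hnq (hIR a0 h hm).2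
        · have hbneh : lam.toFun b ≠ some h := by
            intro he'; exact hbne (lam.inj he' hm)
          refine hNB b h ⟨?_, Or.inl ⟨a0, hm, hpref⟩⟩
          refine head_outPrefers _ hbh hbneh ?_
          intro w' hw'
          exact (hIR b w' hw').1
      constructor
      · intro a w hm
        obtain ⟨h1, h2⟩ := hIR a w hm
        refine ⟨?_, h2⟩
        by_cases ha : a = a0
        · subst ha
          rw [ea]
          have h1' : w ∈ h :: tl := by rw [← eb]; exact h1
          rcases List.mem_cons.mp h1' with e | hmem
          · exact absurd (by rw [e] at hm; exact hm) hlama0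
          · exact hmem
        · rw [show ((⟨nextS qbar s a, hnd' a⟩ : PrefList W)).val = s a from hs' a ha]
          exact h1
      · rintro a w ⟨hout, hwpo⟩
        by_cases ha : a = a0
        · subst ha
          refine hNB _ w ⟨?_, hwpo⟩
          rw [outPrefers_iff] at hout ⊢
          rw [ea] at hout
          have hle : ork tl (lam.toFun a) ≤ tl.length := by
            apply ork_le_length
            intro x hx
            have h1' : x ∈ h :: tl := by rw [← eb]; exact (hIR a x hx).1
            rcases List.mem_cons.mp h1' with e | hmem
            · exact absurd (by rw [e] at hx; exact hx) hlama0
            · exact hmem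
          have hwh : w ≠ h := by
            intro e; subst e
            have hrkw : rk tl w < tl.length := by
              have hid : ork tl (some w) = rk tl w := rfl
              omega
            exact hnotin (rk_lt_length_iff.mp hrkw)
          rw [eb, ork_cons (fun e => hwh (Option.some_inj.mp e)), ork_cons hlama0]
          omega
        · refine hNB a w ⟨?_, hwpo⟩
          rw [outPrefers_iff] at hout ⊢
          rw [show ((⟨nextS qbar s a, hnd' a⟩ : PrefList W)).val = s a from hs' a ha] at hout
          exact hout

variable (pbar : M → PrefList W)

lemma stable_profS_iff (t : ℕ) (lam : Matching M W) :
    IsStable (profS qbar pbar t) qbar lam ↔ IsStable pbar qbar lam := by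
  induction t with
  | zero => rw [profS_zero]
  | succ n ih =>
    rw [← ih]
    have heq : profS qbar pbar (n + 1) =
        fun a => (⟨nextS qbar (stepsS qbar pbar n) a, by
          rw [← congrFun (stepsS_succ qbar pbar n) a]
          exact stepsS_nodup qbar pbar (n+1) a⟩ : PrefList W) := by
      funext a
      exact Subtype.ext (congrFun (stepsS_succ qbar pbar n) a)
    rw [heq]
    exact stable_nextS_iff qbar (stepsS qbar pbar n) (stepsS_nodup qbar pbar n) _ lam

end SPAux
namespace SPAux

open List

variable {M W : Type} [Fintype M] [Fintype W] [DecidableEq M] [DecidableEq W]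

variable (qbar : W → PrefList M) (pbar : M → PrefList W)

def sizeS (s : M → List W) : ℕ := ∑ a, (s a).length

lemma size_nextS_lt (s : M → List W) (hne : ∃ a, Deletable qbar s a) :
    sizeS (nextS qbar s) < sizeS s := by
  rcases nextS_spec qbar s with ⟨_, hno⟩ | ⟨a0, hdel, he⟩
  · exact absurd hne hno
  · obtain ⟨h, tl, hsa, _⟩ := hdel
    unfold sizeS
    rw [he]
    have e1 : ∑ a, (Function.update s a0 (s a0).tail a).length =
        (∑ a ∈ Finset.univ.erase a0, (s a).length) + ((s a0).tail).length := by
      rw [← Finset.sum_erase_add _ _ (Finset.mem_univ a0), Function.update_self]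
      congr 1
      apply Finset.sum_congr rfl
      intro x hx
      rw [Function.update_of_ne (Finset.ne_of_mem_erase hx)]
    have e2 : ∑ a, (s a).length =
        (∑ a ∈ Finset.univ.erase a0, (s a).length) + (s a0).length := by
      rw [← Finset.sum_erase_add _ _ (Finset.mem_univ a0)]
    have e3 : ((s a0).tail).length < (s a0).length := by
      rw [hsa]; simp
    omega

/-- the termination bound -/
def TendS : ℕ := ∑ a, (pbar a).val.length

lemma terminal_Tend : ¬ ∃ a, Deletable qbar (stepsS qbar pbar (TendS pbar)) a := by
  have key : ∀ t : ℕ, (∃ t' ≤ t, ¬ ∃ a, Deletable qbar (stepsS qbar pbar t') a) ∨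
      sizeS (stepsS qbar pbar t) + t ≤ TendS pbar := by
    intro t
    induction t with
    | zero => right; exact le_of_eq (by rfl)
    | succ n ih =>
      rcases ih with ⟨t', ht', hterm⟩ | hsz
      · exact Or.inl ⟨t', le_trans ht' (Nat.le_succ n), hterm⟩
      · by_cases hdel : ∃ a, Deletable qbar (stepsS qbar pbar n) a
        · right
          have := size_nextS_lt qbar (stepsS qbar pbar n) hdel
          rw [← stepsS_succ] at this
          omega
        · exact Or.inl ⟨n, Nat.le_succ n, hdel⟩
  have persist : ∀ t' t, t' ≤ t → (¬ ∃ a, Deletable qbar (stepsS qbar pbar t') a) →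
      stepsS qbar pbar t = stepsS qbar pbar t' := by
    intro t' t hle hterm
    induction t with
    | zero => cases Nat.le_zero.mp hle; rfl
    | succ n ih =>
      rcases Nat.lt_or_ge t' (n+1) with hlt | hge
      · have hn := ih (Nat.lt_succ_iff.mp hlt)
        rw [stepsS_succ, hn]
        rcases nextS_spec qbar (stepsS qbar pbar t') with ⟨he, _⟩ | ⟨a, hdel, _⟩
        · exact he
        · exact absurd ⟨a, hdel⟩ hterm
      · have : t' = n + 1 := le_antisymm hle hge
        rw [this]
    -- done persist
  rcases key (TendS pbar) with ⟨t', ht', hterm⟩ | hsz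
  · rw [persist t' (TendS pbar) ht' hterm]; exact hterm
  · -- size is 0, so all lists empty, hence no deletable
    rintro ⟨a, h, tl, hsa, _⟩
    have h0 : sizeS (stepsS qbar pbar (TendS pbar)) = 0 := by omega
    have : (stepsS qbar pbar (TendS pbar) a).length = 0 := by
      unfold sizeS at h0
      have := Finset.sum_eq_zero_iff.mp h0 a (Finset.mem_univ a)
      exact this
    rw [hsa] at this; simp at this

lemma terminal_good {s : M → List W} (hterm : ¬ ∃ a, Deletable qbar s a)
    {a : M} {h : W} {tl : List W} (hsa : s a = h :: tl) :
    a ∈ (qbar h).val ∧ ∀ b, b ≠ a → (s b).head? ≠ some h := by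
  have haq : a ∈ (qbar h).val := by
    by_contra hnq
    exact hterm ⟨a, h, tl, hsa, Or.inl hnq⟩
  refine ⟨haq, ?_⟩
  intro b hba hbh
  obtain ⟨tb, htb⟩ := head?_cons hbh
  have hbq : b ∈ (qbar h).val := by
    by_contra hnq
    exact hterm ⟨b, h, tb, htb, Or.inl hnq⟩
  rcases prefers_total (qbar h) hbq haq hba with hp | hp
  · exact hterm ⟨a, h, tl, hsa, Or.inr ⟨b, hba, hbh, hbq, hp⟩⟩
  · have hah : (s a).head? = some h := by rw [hsa]; rfl
    exact hterm ⟨b, h, tb, htb, Or.inr ⟨a, Ne.symm hba, hah, haq, hp⟩⟩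

/-- The matching produced by the deletion process: everybody marries the head of
his terminal list. -/
noncomputable def sigma : Matching M W where
  toFun := fun a => (stepsS qbar pbar (TendS pbar) a).head?
  inj := by
    intro a b w ha hb
    by_contra hab
    obtain ⟨ta, hta⟩ := head?_cons ha
    exact (terminal_good qbar (terminal_Tend qbar pbar) hta).2 b (fun e => hab e.symm) hb

lemma sigma_stable : IsStable pbar qbar (sigma qbar pbar) := by
  rw [← stable_profS_iff qbar pbar (TendS pbar)]
  rw [isStable_iff]
  constructor
  · intro a w hm
    obtain ⟨ta, hta⟩ := head?_cons hm
    constructor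
    · show w ∈ stepsS qbar pbar (TendS pbar) a
      rw [hta]; exact List.mem_cons_self
    · exact (terminal_good qbar (terminal_Tend qbar pbar) hta).1
  · rintro a w ⟨hout, _⟩
    rw [outPrefers_iff] at hout
    rcases hl : stepsS qbar pbar (TendS pbar) a with _ | ⟨h, tl⟩
    · have hσ : (sigma qbar pbar).toFun a = none := by
        show (stepsS qbar pbar (TendS pbar) a).head? = none
        rw [hl]; rfl
      rw [hσ] at hout
      have : ork (stepsS qbar pbar (TendS pbar) a) (some w) <
          (stepsS qbar pbar (TendS pbar) a).length := hout
      have hw : w ∈ stepsS qbar pbar (TendS pbar) a := by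
        rw [← rk_lt_length_iff]
        exact this
      rw [hl] at hw; simp at hw
    · have hσ : (sigma qbar pbar).toFun a = some h := by
        show (stepsS qbar pbar (TendS pbar) a).head? = some h
        rw [hl]; rfl
      rw [hσ] at hout
      have h0 : ork ((profS qbar pbar (TendS pbar) a)).val (some h) = 0 := by
        show ork (stepsS qbar pbar (TendS pbar) a) (some h) = 0
        rw [hl]; simp [ork, rk, List.idxOf_cons_self]
      omega

lemma sigma_opt (lam : Matching M W) (hst : IsStable pbar qbar lam) (a : M) :
    ¬ outPrefers (pbar a) (lam.toFun a) ((sigma qbar pbar).toFun a) := by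
  have hstT := (stable_profS_iff qbar pbar (TendS pbar) lam).mpr hst
  rw [isStable_iff] at hstT
  have hIR : ∀ w, lam.toFun a = some w → w ∈ stepsS qbar pbar (TendS pbar) a :=
    fun w hm => (hstT.1 a w hm).1
  rw [outPrefers_iff]
  rcases hl : stepsS qbar pbar (TendS pbar) a with _ | ⟨h, tl⟩
  · have hσ : (sigma qbar pbar).toFun a = none := by
      show (stepsS qbar pbar (TendS pbar) a).head? = none
      rw [hl]; rfl
    rw [hσ]
    match hm : lam.toFun a with
    | none => simp [ork]
    | some w =>
      have := hIR w hm
      rw [hl] at this; simp at this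
  · have hσ : (sigma qbar pbar).toFun a = some h := by
      show (stepsS qbar pbar (TendS pbar) a).head? = some h
      rw [hl]; rfl
    rw [hσ]
    have hsub : (h :: tl).Sublist (pbar a).val := by
      rw [← hl]; exact (stepsS_suffix_p qbar pbar (TendS pbar) a).sublist
    have hhp : h ∈ (pbar a).val := hsub.mem (List.mem_cons_self)
    match hm : lam.toFun a with
    | none =>
      show ¬ (ork (pbar a).val none < ork (pbar a).val (some h))
      have : rk (pbar a).val h < (pbar a).val.length := rk_lt_length_iff.mpr hhp
      show ¬ ((pbar a).val.length < rk (pbar a).val h)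
      omega
    | some w =>
      have hw : w ∈ h :: tl := by rw [← hl]; exact hIR w hm
      show ¬ (rk (pbar a).val w < rk (pbar a).val h)
      rcases List.mem_cons.mp hw with e | hmem
      · subst e; omega
      · have hpair : [h, w].Sublist (pbar a).val :=
          List.Sublist.trans (List.cons_sublist_cons.mpr (List.singleton_sublist.mpr hmem)) hsub
        have := rk_lt_of_pair (pbar a).prop hpair
        omega

end SPAux
namespace SPAux

open List

variable {M W : Type} [Fintype M] [Fintype W] [DecidableEq M] [DecidableEq W]

lemma rk_head_lt_of_mem_tail {p : List W} (hp : p.Nodup) {h : W} {tl : List W}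
    (hsuf : (h :: tl) <:+ p) {y : W} (hy : y ∈ tl) : rk p h < rk p y := by
  have hpair : [h, y].Sublist p :=
    List.Sublist.trans (List.cons_sublist_cons.mpr (List.singleton_sublist.mpr hy))
      hsuf.sublist
  exact rk_lt_of_pair hp hpair

variable (qbar : W → PrefList M) (pbar : M → PrefList W)

lemma step_change {t : ℕ} {a b : M}
    (ha : stepsS qbar pbar (t+1) a ≠ stepsS qbar pbar t a)
    (hb : stepsS qbar pbar (t+1) b ≠ stepsS qbar pbar t b) : a = b := by
  rw [stepsS_succ] at ha hb
  rcases nextS_spec qbar (stepsS qbar pbar t) with ⟨he, _⟩ | ⟨a0, _, he⟩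
  · rw [he] at ha; exact absurd rfl ha
  · rw [he] at ha hb
    by_cases h1 : a = a0
    · by_cases h2 : b = a0
      · rw [h1, h2]
      · rw [Function.update_of_ne h2] at hb; exact absurd rfl hb
    · rw [Function.update_of_ne h1] at ha; exact absurd rfl ha

lemma deletion_step {t : ℕ} {a : M} {w : W}
    (hw : w ∈ stepsS qbar pbar t a) (hw' : w ∉ stepsS qbar pbar (t+1) a) :
    stepsS qbar pbar t a = w :: stepsS qbar pbar (t+1) a ∧
      Deletable qbar (stepsS qbar pbar t) a := by
  have hne : stepsS qbar pbar (t+1) a ≠ stepsS qbar pbar t a := by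
    intro he; rw [he] at hw'; exact hw' hw
  rw [stepsS_succ] at hne hw' ⊢
  rcases nextS_spec qbar (stepsS qbar pbar t) with ⟨he, _⟩ | ⟨a0, hdel, he⟩
  · rw [he] at hne; exact absurd rfl hne
  · rw [he] at hne hw' ⊢
    by_cases h1 : a = a0
    · subst h1
      refine ⟨?_, hdel⟩
      obtain ⟨h, tl, hsa, _⟩ := hdel
      rw [Function.update_self] at hw' ⊢
      rw [hsa] at hw hw' ⊢
      rw [List.tail_cons] at hw' ⊢
      have hwh : w = h := by
        rcases List.mem_cons.mp hw with e | hmem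
        · exact e
        · exact absurd hmem hw'
      rw [hwh]
    · rw [Function.update_of_ne h1] at hne; exact absurd rfl hne

lemma head_persist {a : M} {t t' : ℕ} (h1 : t ≤ t') (h2 : t' ≤ TendS pbar)
    (hh : (stepsS qbar pbar t a).head? = (stepsS qbar pbar (TendS pbar) a).head?) :
    (stepsS qbar pbar t' a).head? = (stepsS qbar pbar (TendS pbar) a).head? := by
  rcases hT : (stepsS qbar pbar (TendS pbar) a).head? with _ | x
  · -- terminal list empty, so list at t empty, so list at t' empty
    rw [hT] at hh
    have h0 : stepsS qbar pbar t a = [] := List.head?_eq_none_iff.mp hh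
    have : stepsS qbar pbar t' a = [] := by
      have hsuf := stepsS_suffix qbar pbar h1 a
      rw [h0] at hsuf
      exact List.suffix_nil.mp hsuf
    rw [this]; rfl
  · rw [hT] at hh
    obtain ⟨r0, hr0⟩ := head?_cons hh
    obtain ⟨rT, hrT⟩ := head?_cons hT
    rcases hy : stepsS qbar pbar t' a with _ | ⟨y, r⟩
    · exfalso
      have hsuf := stepsS_suffix qbar pbar h2 a
      rw [hy, hrT] at hsuf
      have := List.suffix_nil.mp hsuf
      simp at this
    · by_cases hxy : y = x
      · simp [hy, hxy, hT]
    -- y ≠ x: derive rank contradiction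
      · exfalso
        have hp := (pbar a).prop
        have hsuf' : (y :: r) <:+ (pbar a).val := by
          rw [← hy]; exact stepsS_suffix_p qbar pbar t' a
        have hsuf0 : (x :: r0) <:+ (pbar a).val := by
          rw [← hr0]; exact stepsS_suffix_p qbar pbar t a
        have hxmem : x ∈ y :: r := by
          have hsufT : (x :: rT) <:+ (y :: r) := by
            rw [← hy, ← hrT]; exact stepsS_suffix qbar pbar h2 a
          exact hsufT.sublist.mem (List.mem_cons_self)
        have hxr : x ∈ r := by
          rcases List.mem_cons.mp hxmem with e | hmem
          · exact absurd e.symm hxy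
          · exact hmem
        have hymem : y ∈ x :: r0 := by
          have hsuft : (y :: r) <:+ (x :: r0) := by
            rw [← hy, ← hr0]; exact stepsS_suffix qbar pbar h1 a
          exact hsuft.sublist.mem (List.mem_cons_self)
        have hyr : y ∈ r0 := by
          rcases List.mem_cons.mp hymem with e | hmem
          · exact absurd e hxy
          · exact hmem
        have l1 := rk_head_lt_of_mem_tail hp hsuf' hxr
        have l2 := rk_head_lt_of_mem_tail hp hsuf0 hyr
        omega

lemma Hmono (w : W) {t t' : ℕ} (htt : t ≤ t') {b : M}
    (hb : (stepsS qbar pbar t b).head? = some w) (hbq : b ∈ (qbar w).val) :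
    ∃ b', (stepsS qbar pbar t' b').head? = some w ∧ b' ∈ (qbar w).val ∧
      (b' = b ∨ prefers (qbar w) b' b) := by
  induction t' with
  | zero =>
    cases Nat.le_zero.mp htt
    exact ⟨b, hb, hbq, Or.inl rfl⟩
  | succ n ih =>
    rcases Nat.lt_or_ge t (n+1) with hlt | hge
    · obtain ⟨c, hc, hcq, hcp⟩ := ih (Nat.lt_succ_iff.mp hlt)
      by_cases hch : (stepsS qbar pbar (n+1) c).head? = some w
      · exact ⟨c, hch, hcq, hcp⟩
      · -- c's head changed: w was deleted from c's list
        obtain ⟨tc, htc⟩ := head?_cons hc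
        have hwmem : w ∈ stepsS qbar pbar n c := by rw [htc]; exact List.mem_cons_self
        have hwdel : w ∉ stepsS qbar pbar (n+1) c := by
          intro hmem
          -- w in suffix of w::tc, head ≠ w: contradiction by nodup/suffix ranks
          rcases hy : stepsS qbar pbar (n+1) c with _ | ⟨y, r⟩
          · rw [hy] at hmem; simp at hmem
          · have hyw : y ≠ w := by
              intro e; rw [hy, e] at hch; exact hch rfl
            have hsuf1 : (y :: r) <:+ (w :: tc) := by
              rw [← hy, ← htc]; exact stepsS_suffix qbar pbar (Nat.le_succ n) c
            have hp := (pbar c).prop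
            have hsufp : (w :: tc) <:+ (pbar c).val := by
              rw [← htc]; exact stepsS_suffix_p qbar pbar n c
            have hsufp' : (y :: r) <:+ (pbar c).val :=
              hsuf1.trans hsufp
            have hymem : y ∈ w :: tc := hsuf1.sublist.mem (List.mem_cons_self)
            have hytc : y ∈ tc := by
              rcases List.mem_cons.mp hymem with e | hm
              · exact absurd e hyw
              · exact hm
            have hwmem' : w ∈ y :: r := by rw [← hy]; exact hmem
            have hwr : w ∈ r := by
              rcases List.mem_cons.mp hwmem' with e | hm
              · exact absurd e.symm hyw
              · exact hm
            have l1 := rk_head_lt_of_mem_tail hp hsufp hytc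
            have l2 := rk_head_lt_of_mem_tail hp hsufp' hwr
            omega
        obtain ⟨hcons, hdel⟩ := deletion_step qbar pbar hwmem hwdel
        obtain ⟨h, tl, hsc, hjust⟩ := hdel
        have hhw : h = w := by
          rw [hcons] at hsc
          exact (List.cons_eq_cons.mp hsc).1.symm
        subst hhw
        rcases hjust with hnq | ⟨b2, hb2ne, hb2h, hb2q, hb2p⟩
        · exact absurd hcq hnq
        · have hb2h' : (stepsS qbar pbar (n+1) b2).head? = some h := by
            have hne : stepsS qbar pbar (n+1) c ≠ stepsS qbar pbar n c := by
              intro he; rw [he] at hwdel; exact hwdel hwmem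
            by_cases hchg : stepsS qbar pbar (n+1) b2 = stepsS qbar pbar n b2
            · rw [hchg]; exact hb2h
            · exact absurd (step_change qbar pbar hchg hne) hb2ne
          refine ⟨b2, hb2h', hb2q, Or.inr ?_⟩
          rcases hcp with e | hp
          · rw [← e]; exact hb2p
          · exact prefers_trans hb2p hp
    · have : t = n + 1 := le_antisymm htt hge
      subst this
      exact ⟨b, hb, hbq, Or.inl rfl⟩

end SPAux
namespace SPAux

open List Finset

variable {M W : Type} [Fintype M] [Fintype W] [DecidableEq M] [DecidableEq W]
variable (qbar : W → PrefList M) (pbar : M → PrefList W)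

theorem blocking_lemma (nu : Matching M W)
    (hIR : ∀ a w, nu.toFun a = some w → w ∈ (pbar a).val ∧ a ∈ (qbar w).val)
    (m : M) (hm : outPrefers (pbar m) (nu.toFun m) ((sigma qbar pbar).toFun m)) :
    ∃ b w, ¬ outPrefers (pbar b) (nu.toFun b) ((sigma qbar pbar).toFun b) ∧
      outPrefers (pbar b) (some w) (nu.toFun b) ∧ womanPrefersOver (qbar w) nu w b := by
  classical
  have hσst := sigma_stable qbar pbar
  rw [isStable_iff] at hσst
  obtain ⟨hσIR, hσNB⟩ := hσst
  set MP : M → Prop := fun a =>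
    outPrefers (pbar a) (nu.toFun a) ((sigma qbar pbar).toFun a) with hMPdef
  have hork_σ_le : ∀ a, ork (pbar a).val ((sigma qbar pbar).toFun a) ≤ (pbar a).val.length :=
    fun a => ork_le_length (fun y hy => (hσIR a y hy).1)
  have hmatched : ∀ a, MP a → ∃ w, nu.toFun a = some w ∧ w ∈ (pbar a).val ∧
      rk (pbar a).val w < ork (pbar a).val ((sigma qbar pbar).toFun a) := by
    intro a ha
    rw [hMPdef] at ha
    rw [outPrefers_iff] at ha
    match hν : nu.toFun a with
    | none =>
      exfalso
      rw [hν] at ha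
      have h1 : ork (pbar a).val none = (pbar a).val.length := rfl
      have h2 := hork_σ_le a
      omega
    | some w =>
      rw [hν] at ha
      have h1 : ork (pbar a).val (some w) = rk (pbar a).val w := rfl
      have h2 := hork_σ_le a
      refine ⟨w, rfl, ?_, by omega⟩
      rw [← rk_lt_length_iff]
      omega
  by_cases hc : ∃ m', MP m' ∧ ∀ a, MP a → (sigma qbar pbar).toFun a ≠ nu.toFun m'
  · -- CASE 1
    obtain ⟨m', hm', hnone⟩ := hc
    obtain ⟨w, hνm', hwp, hlt⟩ := hmatched m' hm'
    have hm'q : m' ∈ (qbar w).val := (hIR m' w hνm').2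
    have hout : outPrefers (pbar m') (some w) ((sigma qbar pbar).toFun m') := by
      rw [outPrefers_iff]; exact hlt
    have hnwpo : ¬ womanPrefersOver (qbar w) (sigma qbar pbar) w m' :=
      fun hw => hσNB m' w ⟨hout, hw⟩
    have hex : ∃ a, (sigma qbar pbar).toFun a = some w := by
      by_contra hno
      push_neg at hno
      exact hnwpo (Or.inr ⟨hno, hm'q⟩)
    obtain ⟨a, hσa⟩ := hex
    have hnpref : ¬ prefers (qbar w) m' a := fun hp => hnwpo (Or.inl ⟨a, hσa, hp⟩)
    have haM : ¬ MP a := fun hMa => hnone a hMa (by rw [hσa, hνm'])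
    have ham' : a ≠ m' := by
      intro e; subst e
      rw [hσa] at hlt
      have h1 : ork (pbar a).val (some w) = rk (pbar a).val w := rfl
      omega
    have haq : a ∈ (qbar w).val := (hσIR a w hσa).2
    have hpref : prefers (qbar w) a m' := by
      rcases prefers_total (qbar w) haq hm'q ham' with hp | hp
      · exact hp
      · exact absurd hp hnpref
    refine ⟨a, w, haM, ?_, Or.inl ⟨m', hνm', hpref⟩⟩
    rw [outPrefers_iff]
    have hwa : w ∈ (pbar a).val := (hσIR a w hσa).1
    have hraw : ork (pbar a).val ((sigma qbar pbar).toFun a) = rk (pbar a).val w := by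
      rw [hσa]; rfl
    have hle : ¬ (ork (pbar a).val (nu.toFun a) <
        ork (pbar a).val ((sigma qbar pbar).toFun a)) := by
      intro hlt2
      apply haM
      show outPrefers (pbar a) (nu.toFun a) ((sigma qbar pbar).toFun a)
      rw [outPrefers_iff]; exact hlt2
    have hνa : nu.toFun a ≠ some w := by
      intro e; exact ham' (nu.inj e hνm')
    have h1 : ork (pbar a).val (some w) = rk (pbar a).val w := rfl
    by_contra hcon
    push_neg at hcon
    have heq : ork (pbar a).val (some w) = ork (pbar a).val (nu.toFun a) := by omega
    exact hνa (ork_inj hwa rfl heq)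
  · -- CASE 2
    push_neg at hc
    set Mf : Finset M := Finset.univ.filter MP with hMf
    have hmemMf : ∀ a, a ∈ Mf ↔ MP a := by
      intro a; rw [hMf, Finset.mem_filter]
      exact ⟨fun h => h.2, fun h => ⟨Finset.mem_univ _, h⟩⟩
    have hCM : ∀ b0, MP b0 → ∃ w m', (sigma qbar pbar).toFun b0 = some w ∧ MP m' ∧
        nu.toFun m' = some w := by
      intro b0 hb0
      set g : ∀ a ∈ Mf, M := fun m' h => (hc m' ((hmemMf m').mp h)).choose with hg
      have hgMP : ∀ m' h, MP (g m' h) := fun m' h => (hc m' ((hmemMf m').mp h)).choose_spec.1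
      have hgσ : ∀ m' h, (sigma qbar pbar).toFun (g m' h) = nu.toFun m' :=
        fun m' h => (hc m' ((hmemMf m').mp h)).choose_spec.2
      have hmem : ∀ m' (h : m' ∈ Mf), g m' h ∈ Mf := fun m' h => (hmemMf _).mpr (hgMP m' h)
      have hinj : ∀ m1 m2 (h1 : m1 ∈ Mf) (h2 : m2 ∈ Mf), g m1 h1 = g m2 h2 → m1 = m2 := by
        intro m1 m2 h1 h2 he
        obtain ⟨w1, hw1, _, _⟩ := hmatched m1 ((hmemMf m1).mp h1)
        have e1 : nu.toFun m1 = nu.toFun m2 := by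
          rw [← hgσ m1 h1, ← hgσ m2 h2, he]
        exact nu.inj hw1 (by rw [← e1]; exact hw1)
      have hsurj := Finset.surj_on_of_inj_on_of_card_le g hmem hinj (le_refl _)
      obtain ⟨m', hm'f, hbg⟩ := hsurj b0 ((hmemMf b0).mpr hb0)
      obtain ⟨w, hνw, _, _⟩ := hmatched m' ((hmemMf m').mp hm'f)
      refine ⟨w, m', ?_, (hmemMf m').mp hm'f, hνw⟩
      rw [hbg, hgσ m' hm'f, hνw]
    -- the arrival times
    have hexd : ∀ a, ∃ t, (stepsS qbar pbar t a).head? = (sigma qbar pbar).toFun a :=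
      fun a => ⟨TendS pbar, rfl⟩
    set d : M → ℕ := fun a => Nat.find (hexd a) with hd
    have hdspec : ∀ a, (stepsS qbar pbar (d a) a).head? = (sigma qbar pbar).toFun a :=
      fun a => Nat.find_spec (hexd a)
    have hdmin : ∀ a t, t < d a → (stepsS qbar pbar t a).head? ≠ (sigma qbar pbar).toFun a :=
      fun a t ht => Nat.find_min (hexd a) ht
    have hdle : ∀ a, d a ≤ TendS pbar := fun a => Nat.find_min' (hexd a) rfl
    have hU1 : ∀ a t, t ≤ TendS pbar →
        (stepsS qbar pbar t a).head? ≠ (sigma qbar pbar).toFun a → t < d a := by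
      intro a t hle hne
      by_contra hcon
      push_neg at hcon
      exact hne (head_persist qbar pbar hcon hle (hdspec a))
    have hMfne : Mf.Nonempty := ⟨m, (hmemMf m).mpr hm⟩
    obtain ⟨m4, hm4f, hmax⟩ := Finset.exists_max_image Mf d hMfne
    have hm4 : MP m4 := (hmemMf m4).mp hm4f
    obtain ⟨w4, m', hσm4, hm', hνm'⟩ := hCM m4 hm4
    obtain ⟨w4', hνm4, hw4p', hlt4⟩ := hmatched m4 hm4
    have horkm4 : ork (pbar m4).val ((sigma qbar pbar).toFun m4) = rk (pbar m4).val w4 := by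
      rw [hσm4]; rfl
    have hm'ne : m' ≠ m4 := by
      intro e; subst e
      rw [hνm'] at hνm4
      have : w4' = w4 := (Option.some_inj.mp hνm4).symm
      subst this
      omega
    -- d m4 ≥ 1
    have ht1 : 1 ≤ d m4 := by
      by_contra h0
      push_neg at h0
      have h0' : d m4 = 0 := by omega
      have hsp := hdspec m4
      rw [h0', hσm4] at hsp
      obtain ⟨r, hr⟩ := head?_cons hsp
      have hr' : (pbar m4).val = w4 :: r := hr
      have hz : rk (pbar m4).val w4 = 0 := by
        rw [hr']; simp [rk, List.idxOf_cons_self]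
      omega
    -- the rejection time e
    obtain ⟨wσ', hν2, _, hltm'⟩ := hmatched m' hm'
    have hwσ' : wσ' = w4 := by
      rw [hνm'] at hν2; exact (Option.some_inj.mp hν2).symm
    rw [hwσ'] at hltm'
    have hPT : w4 ∉ stepsS qbar pbar (TendS pbar) m' := by
      intro hmem
      rcases hterm : stepsS qbar pbar (TendS pbar) m' with _ | ⟨y, r⟩
      · rw [hterm] at hmem; simp at hmem
      · have hσm' : (sigma qbar pbar).toFun m' = some y := by
          show (stepsS qbar pbar (TendS pbar) m').head? = some y
          rw [hterm]; rfl
        have hor : ork (pbar m').val ((sigma qbar pbar).toFun m') = rk (pbar m').val y := by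
          rw [hσm']; rfl
        have hsuf : (y :: r) <:+ (pbar m').val := by
          rw [← hterm]; exact stepsS_suffix_p qbar pbar (TendS pbar) m'
        rw [hterm] at hmem
        rcases List.mem_cons.mp hmem with e | hmem2
        · rw [e] at hltm'; omega
        · have := rk_head_lt_of_mem_tail (pbar m').prop hsuf hmem2
          omega
    have hexe : ∃ t, w4 ∉ stepsS qbar pbar t m' := ⟨TendS pbar, hPT⟩
    set e : ℕ := Nat.find hexe with he
    have hespec : w4 ∉ stepsS qbar pbar e m' := Nat.find_spec hexe
    have heT : e ≤ TendS pbar := Nat.find_min' hexe hPT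
    have he1 : 1 ≤ e := by
      by_contra h0
      push_neg at h0
      have h0' : e = 0 := by omega
      rw [h0'] at hespec
      exact hespec ((hIR m' w4 hνm').1)
    have hmem1 : w4 ∈ stepsS qbar pbar (e-1) m' := by
      by_contra hcon
      exact Nat.find_min hexe (show e - 1 < e by omega) hcon
    have hespec' : w4 ∉ stepsS qbar pbar (e - 1 + 1) m' := by
      rw [show e - 1 + 1 = e by omega]; exact hespec
    obtain ⟨hconsm', hDel⟩ := deletion_step qbar pbar hmem1 hespec'
    obtain ⟨h, tl, hsm, hjust⟩ := hDel
    have hhw4 : h = w4 := by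
      rw [hconsm'] at hsm; exact (List.cons_eq_cons.mp hsm).1.symm
    rw [hhw4] at hsm hjust
    rcases hjust with hnq | ⟨b, hbne, hbh, hbq, hbp⟩
    · exact absurd (hIR m' w4 hνm').2 hnq
    -- e ≤ d m4
    have hσm'ne : (sigma qbar pbar).toFun m' ≠ some w4 := by
      intro he'
      rw [he'] at hltm'
      have h1 : ork (pbar m').val (some w4) = rk (pbar m').val w4 := rfl
      omega
    have heled : e - 1 < d m' := by
      apply hU1 m' (e-1) (by omega)
      rw [show (stepsS qbar pbar (e-1) m').head? = some w4 from by rw [hconsm']; rfl]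
      exact fun he' => hσm'ne he'.symm
    have helet : e ≤ d m4 := by
      have := hmax m' ((hmemMf m').mpr hm')
      omega
    -- the persistent suitor
    obtain ⟨bs, hbsh, hbsq, hbsp⟩ :=
      Hmono qbar pbar w4 (show e - 1 ≤ d m4 - 1 by omega) hbh hbq
    have hbsm4 : bs ≠ m4 := by
      intro e'
      rw [e'] at hbsh
      exact hdmin m4 (d m4 - 1) (by omega) (by rw [hbsh, hσm4])
    obtain ⟨tb, htb⟩ := head?_cons hbsh
    have hsufb : (w4 :: tb) <:+ (pbar bs).val := by
      rw [← htb]; exact stepsS_suffix_p qbar pbar (d m4 - 1) bs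
    have hw4pb : w4 ∈ (pbar bs).val := hsufb.sublist.mem (List.mem_cons_self)
    have hw4above : rk (pbar bs).val w4 < ork (pbar bs).val ((sigma qbar pbar).toFun bs) := by
      rcases hσb : (sigma qbar pbar).toFun bs with _ | w5
      · have h1 : ork (pbar bs).val none = (pbar bs).val.length := rfl
        have h2 := rk_lt_length_iff.mpr hw4pb
        omega
      · have hw5ne : w5 ≠ w4 := by
          intro e'; subst e'
          exact hbsm4 ((sigma qbar pbar).inj hσb hσm4)
        obtain ⟨rT, hrT⟩ := head?_cons
          (show (stepsS qbar pbar (TendS pbar) bs).head? = some w5 from hσb)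
        have hsufT : (w5 :: rT) <:+ (w4 :: tb) := by
          rw [← hrT, ← htb]
          exact stepsS_suffix qbar pbar
            (show d m4 - 1 ≤ TendS pbar from le_trans (by omega) (hdle m4)) bs
        have hw5mem : w5 ∈ w4 :: tb := hsufT.sublist.mem (List.mem_cons_self)
        have hw5tb : w5 ∈ tb := by
          rcases List.mem_cons.mp hw5mem with e' | hm2
          · exact absurd e' hw5ne
          · exact hm2
        have h3 := rk_head_lt_of_mem_tail (pbar bs).prop hsufb hw5tb
        have h1 : ork (pbar bs).val (some w5) = rk (pbar bs).val w5 := rfl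
        omega
    have hbM : ¬ MP bs := by
      intro hMb
      have hdb_le : d bs ≤ d m4 := hmax bs ((hmemMf bs).mpr hMb)
      have hσb_ne : (stepsS qbar pbar (d m4 - 1) bs).head? ≠ (sigma qbar pbar).toFun bs := by
        rw [hbsh]
        intro he'
        exact hbsm4 ((sigma qbar pbar).inj he'.symm hσm4)
      have hdb_gt : d m4 - 1 < d bs :=
        hU1 bs (d m4 - 1) (le_trans (by omega) (hdle m4)) hσb_ne
      have hdb_eq : d bs = d m4 := by omega
      have hm4chg : stepsS qbar pbar (d m4 - 1 + 1) m4 ≠ stepsS qbar pbar (d m4 - 1) m4 := by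
        intro he'
        have h1 := hdspec m4
        rw [show d m4 - 1 + 1 = d m4 by omega] at he'
        rw [he'] at h1
        exact hdmin m4 (d m4 - 1) (by omega) h1
      have hbchg : stepsS qbar pbar (d m4 - 1 + 1) bs ≠ stepsS qbar pbar (d m4 - 1) bs := by
        intro he'
        have h1 := hdspec bs
        rw [hdb_eq] at h1
        rw [show d m4 - 1 + 1 = d m4 by omega] at he'
        rw [he'] at h1
        exact hσb_ne h1
      exact hbsm4 (step_change qbar pbar hbchg hm4chg)
    have hout : outPrefers (pbar bs) (some w4) (nu.toFun bs) := by
      rw [outPrefers_iff]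
      have hnlt : ¬ (ork (pbar bs).val (nu.toFun bs) <
          ork (pbar bs).val ((sigma qbar pbar).toFun bs)) := by
        intro h'
        apply hbM
        show outPrefers (pbar bs) (nu.toFun bs) ((sigma qbar pbar).toFun bs)
        rw [outPrefers_iff]; exact h'
      have h1 : ork (pbar bs).val (some w4) = rk (pbar bs).val w4 := rfl
      omega
    have hpm' : prefers (qbar w4) bs m' := by
      rcases hbsp with e' | hp
      · rw [e']; exact hbp
      · exact prefers_trans hp hbp
    exact ⟨bs, w4, hbM, hout, Or.inl ⟨m', hνm', hpm'⟩⟩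

end SPAux

open SPAux

/-- For every profile `qbar` of preference lists for the women over the
men, the M-optimal stable matching rule `C^qbar` is strategy-proof for every man. -/
theorem mOptimalStableRule_strategyProof
    {M W : Type} [Fintype M] [Fintype W] [DecidableEq M]
    (qbar : W → PrefList M) (C : (M → PrefList W) → Matching M W)
    (hC : IsMOptimalStableRule qbar C) :
    ∀ m : M, StrategyProofFor C m := by
  classical
  intro m pbar p'
  letI : DecidableEq W := Classical.decEq W
  intro hpref
  obtain ⟨hstab, hopt⟩ := hC pbar
  obtain ⟨hstab', _⟩ := hC (Function.update pbar m p')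
  set nu : Matching M W := C (Function.update pbar m p') with hnu
  rw [SPAux.isStable_iff] at hstab hstab'
  obtain ⟨hIRt, hNBt⟩ := hstab
  obtain ⟨hIR', hNB'⟩ := hstab'
  -- extract the partner of `m` under the manipulated outcome
  have hle : ork (pbar m).val ((C pbar).toFun m) ≤ (pbar m).val.length :=
    SPAux.ork_le_length (fun y hy => (hIRt m y hy).1)
  have hprefo : ork (pbar m).val (nu.toFun m) < ork (pbar m).val ((C pbar).toFun m) := by
    rw [SPAux.outPrefers_iff] at hpref; exact hpref
  have hςm : ∃ ws, nu.toFun m = some ws ∧ ws ∈ (pbar m).val := by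
    match hν : nu.toFun m with
    | none =>
      exfalso
      rw [hν] at hprefo
      have h0 : ork (pbar m).val none = (pbar m).val.length := rfl
      omega
    | some ws =>
      refine ⟨ws, rfl, ?_⟩
      rw [hν] at hprefo
      have h0 : ork (pbar m).val (some ws) = rk (pbar m).val ws := rfl
      rw [← SPAux.rk_lt_length_iff]
      omega
  obtain ⟨ws, hνm, hwsp⟩ := hςm
  -- individual rationality of `nu` with respect to the true profile
  have hIRν : ∀ a w, nu.toFun a = some w → w ∈ (pbar a).val ∧ a ∈ (qbar w).val := by
    intro a w hma
    obtain ⟨h1, h2⟩ := hIR' a w hma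
    refine ⟨?_, h2⟩
    by_cases ha : a = m
    · subst ha
      rw [hma] at hνm
      rw [Option.some_inj.mp hνm]
      exact hwsp
    · rwa [Function.update_of_ne ha] at h1
  -- all blocking pairs of `nu` under the true profile involve `m`
  have hnoblock : ∀ b w, b ≠ m →
      ¬ (outPrefers (pbar b) (some w) (nu.toFun b) ∧ womanPrefersOver (qbar w) nu w b) := by
    rintro b w hbm ⟨h1, h2⟩
    apply hNB' b w
    refine ⟨?_, h2⟩
    rw [Function.update_of_ne hbm]
    exact h1
  -- the DA outcome agrees with `C pbar` in rank for `m`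
  have hσst := SPAux.sigma_stable qbar pbar
  have h1 := hopt _ hσst m
  have h2 := SPAux.sigma_opt qbar pbar (C pbar)
      ((SPAux.isStable_iff).mpr ⟨hIRt, hNBt⟩) m
  rw [SPAux.outPrefers_iff] at h1 h2
  have hm4σ : outPrefers (pbar m) (nu.toFun m) ((SPAux.sigma qbar pbar).toFun m) := by
    rw [SPAux.outPrefers_iff]
    omega
  obtain ⟨b, w, hbM, hbout, hbwpo⟩ := SPAux.blocking_lemma qbar pbar nu hIRν m hm4σ
  have hbm : b ≠ m := fun e => hbM (by rw [e]; exact hm4σ)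
  exact hnoblock b w hbm ⟨hbout, hbwpo⟩
end

section
/- For every profile q̄ ∈ P(M)^W of preference lists for the women over the men, no q̄-stable one-side-querying matching rule other than the M-optimal stable matching rule C^q̄ is strategy-proof; that is, if C is q̄-stable and strategy-proof, then C = C^q̄. -/
lemma list_pair_sublist_total {α : Type} {l : List α} (h : l.Nodup) {x y : α}
    (hx : x ∈ l) (hy : y ∈ l) (hne : x ≠ y) : [x, y].Sublist l ∨ [y, x].Sublist l := by
  induction l with
  | nil => simp at hx
  | cons a t ih =>
    rcases List.nodup_cons.mp h with ⟨_, ht⟩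
    rcases List.mem_cons.mp hx with rfl | hx'
    · have hy' : y ∈ t := by
        rcases List.mem_cons.mp hy with rfl | h'
        · exact absurd rfl hne
        · exact h'
      exact Or.inl ((List.singleton_sublist.mpr hy').cons₂ _)
    · rcases List.mem_cons.mp hy with rfl | hy'
      · exact Or.inr ((List.singleton_sublist.mpr hx').cons₂ _)
      · rcases ih ht hx' hy' with h' | h'
        · exact Or.inl (h'.cons _)
        · exact Or.inr (h'.cons _)

lemma prefers_irrefl {α : Type} (p : PrefList α) (x : α) : ¬ prefers p x x := by
  rintro (h | ⟨h1, h2⟩)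
  · have := h.nodup p.2
    simp at this
  · exact h2 h1

lemma prefers_total {α : Type} (p : PrefList α) {x y : α}
    (hx : x ∈ p.val) (hy : y ∈ p.val) (hne : x ≠ y) : prefers p x y ∨ prefers p y x :=
  (list_pair_sublist_total p.2 hx hy hne).imp Or.inl Or.inl

lemma stable_mem {M W : Type} {pbar : M → PrefList W} {qbar : W → PrefList M}
    {μ : Matching M W} (h : IsStable pbar qbar μ) {m : M} {w : W}
    (hm : μ.toFun m = some w) : w ∈ (pbar m).val ∧ m ∈ (qbar w).val := by
  by_contra hc
  exact h (Or.inr ⟨m, w, hm, by tauto⟩)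

lemma stable_noblock {M W : Type} {pbar : M → PrefList W} {qbar : W → PrefList M}
    {μ : Matching M W} (h : IsStable pbar qbar μ) (m : M) (w : W) :
    ¬ (outPrefers (pbar m) (some w) (μ.toFun m) ∧ womanPrefersOver (qbar w) μ w m) :=
  fun hc => h (Or.inl ⟨m, w, hc⟩)

lemma Matching.ext' {M W : Type} {a b : Matching M W} (h : a.toFun = b.toFun) : a = b := by
  cases a; cases b; simpa using h

lemma rural {M W : Type} [Finite W] (pbar : M → PrefList W) (qbar : W → PrefList M)
    (μ ν : Matching M W) (hμs : IsStable pbar qbar μ) (hνs : IsStable pbar qbar ν)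
    (m₀ : M) (w₀ : W) (h0 : ν.toFun m₀ = some w₀) (hu : μ.toFun m₀ = none) : False := by
  classical
  have step : ∀ m' w', ν.toFun m' = some w' →
      outPrefers (pbar m') (some w') (μ.toFun m') →
      ∃ m'' w'', ν.toFun m'' = some w'' ∧
        outPrefers (pbar m'') (some w'') (μ.toFun m'') ∧ μ.toFun m'' = some w' := by
    intro m' w' hν' hpref
    have hm'q : m' ∈ (qbar w').val := (stable_mem hνs hν').2
    have hnb := stable_noblock hμs m' w'
    have hnw : ¬ womanPrefersOver (qbar w') μ w' m' := fun hw => hnb ⟨hpref, hw⟩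
    rw [womanPrefersOver] at hnw
    push_neg at hnw
    obtain ⟨hA, hB⟩ := hnw
    obtain ⟨m'', hm''⟩ : ∃ m'', μ.toFun m'' = some w' := by
      by_contra hc
      push_neg at hc
      exact (hB hc) hm'q
    have hm''q : m'' ∈ (qbar w').val := (stable_mem hμs hm'').2
    have hw'pm'' : w' ∈ (pbar m'').val := (stable_mem hμs hm'').1
    have hne : m'' ≠ m' := by
      rintro rfl
      rw [hm''] at hpref
      exact prefers_irrefl _ _ hpref
    have hnp : ¬ prefers (qbar w') m' m'' := hA m'' hm''
    have hpq : prefers (qbar w') m'' m' :=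
      (prefers_total _ hm''q hm'q hne).resolve_right hnp
    have hwP : womanPrefersOver (qbar w') ν w' m'' := Or.inl ⟨m', hν', hpq⟩
    have hnpref2 : ¬ outPrefers (pbar m'') (some w') (ν.toFun m'') :=
      fun h => stable_noblock hνs m'' w' ⟨h, hwP⟩
    cases hc : ν.toFun m'' with
    | none =>
      exfalso
      apply hnpref2
      rw [hc]
      exact hw'pm''
    | some w'' =>
      have hw''ne : w'' ≠ w' := by
        rintro rfl
        exact hne (ν.inj hc hν')
      have hw''p : w'' ∈ (pbar m'').val := (stable_mem hνs hc).1
      have hp2 : prefers (pbar m'') w'' w' := by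
        have h' : ¬ prefers (pbar m'') w' w'' := by
          intro h
          apply hnpref2
          rw [hc]
          exact h
        exact (prefers_total _ hw''p hw'pm'' hw''ne).resolve_right h'
      exact ⟨m'', w'', hc, by rw [hm'']; exact hp2, hm''⟩
  -- build the infinite sequence
  choose! F G hF1 hF2 hF3 using step
  let T := {p : M × W // ν.toFun p.1 = some p.2 ∧
      outPrefers (pbar p.1) (some p.2) (μ.toFun p.1)}
  have base : ν.toFun m₀ = some w₀ ∧ outPrefers (pbar m₀) (some w₀) (μ.toFun m₀) := by
    refine ⟨h0, ?_⟩
    rw [hu]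
    exact (stable_mem hνs h0).1
  let g : ℕ → T := fun n => Nat.rec ⟨(m₀, w₀), base⟩
    (fun _ q => ⟨(F q.1.1 q.1.2, G q.1.1 q.1.2),
      hF1 q.1.1 q.1.2 q.2.1 q.2.2, hF2 q.1.1 q.1.2 q.2.1 q.2.2⟩) n
  have hgν : ∀ n, ν.toFun (g n).1.1 = some ((g n).1.2) := fun n => (g n).2.1
  have hgs : ∀ n, μ.toFun (g (n + 1)).1.1 = some ((g n).1.2) := fun n =>
    hF3 (g n).1.1 (g n).1.2 (g n).2.1 (g n).2.2
  have key : ∀ i j, i < j → (g i).1.2 = (g j).1.2 → False := by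
    intro i
    induction i with
    | zero =>
      intro j hij he
      obtain ⟨k, rfl⟩ : ∃ k, j = k + 1 := ⟨j - 1, by omega⟩
      have h2 : ν.toFun (g (k + 1)).1.1 = some ((g 0).1.2) := by
        rw [he]; exact hgν (k + 1)
      have hm := ν.inj (hgν 0) h2
      have h3 := hgs k
      rw [← hm] at h3
      have h4 : (g 0).1.1 = m₀ := rfl
      rw [h4, hu] at h3
      exact Option.some_ne_none _ h3.symm
    | succ i ih =>
      intro j hij he
      obtain ⟨k, rfl⟩ : ∃ k, j = k + 1 := ⟨j - 1, by omega⟩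
      have h2 : ν.toFun (g (k + 1)).1.1 = some ((g (i + 1)).1.2) := by
        rw [he]; exact hgν (k + 1)
      have hm := ν.inj (hgν (i + 1)) h2
      have h3 := hgs i
      have h4 := hgs k
      rw [← hm] at h4
      rw [h3] at h4
      exact ih k (by omega) (Option.some_injective _ h4)
  obtain ⟨a, b, hab, he⟩ := Finite.exists_ne_map_eq_of_infinite (fun n => (g n).1.2)
  rcases hab.lt_or_gt with h | h
  · exact key _ _ h he
  · exact key _ _ h he.symm

/-- For every women's profile `qbar`, no `qbar`-stable matching rule
other than the M-optimal stable matching rule `C^qbar` is strategy-proof: if `C` is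
`qbar`-stable and strategy-proof then `C = C^qbar`. -/
theorem stable_strategyProof_eq_mOptimal
    {M W : Type} [Fintype M] [Fintype W] [DecidableEq M]
    (qbar : W → PrefList M) (C Copt : (M → PrefList W) → Matching M W)
    (hstable : IsStableRule qbar C)
    (hsp : ∀ m : M, StrategyProofFor C m)
    (hopt : IsMOptimalStableRule qbar Copt) :
    C = Copt := by
  classical
  funext pbar
  apply Matching.ext'
  by_contra hne
  obtain ⟨m, hnem⟩ := Function.ne_iff.mp hne
  have hCs : IsStable pbar qbar (C pbar) := hstable pbar
  have hOs : IsStable pbar qbar (Copt pbar) := (hopt pbar).1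
  have hOopt : ¬ outPrefers (pbar m) ((C pbar).toFun m) ((Copt pbar).toFun m) :=
    (hopt pbar).2 (C pbar) hCs m
  obtain ⟨w, hw, hpref⟩ : ∃ w, (Copt pbar).toFun m = some w ∧
      outPrefers (pbar m) (some w) ((C pbar).toFun m) := by
    cases hc : (C pbar).toFun m with
    | none =>
      cases ho : (Copt pbar).toFun m with
      | none => exact absurd (hc.trans ho.symm) hnem
      | some w =>
        exact ⟨w, rfl, (stable_mem hOs ho).1⟩
    | some w' =>
      cases ho : (Copt pbar).toFun m with
      | none =>
        exfalso
        apply hOopt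
        rw [hc, ho]
        exact (stable_mem hCs hc).1
      | some w =>
        have hne' : w ≠ w' := by
          rintro rfl
          rw [hc, ho] at hnem
          exact hnem rfl
        have hwp : w ∈ (pbar m).val := (stable_mem hOs ho).1
        have hw'p : w' ∈ (pbar m).val := (stable_mem hCs hc).1
        have hnp : ¬ prefers (pbar m) w' w := by
          intro h
          apply hOopt
          rw [hc, ho]
          exact h
        exact ⟨w, rfl, (prefers_total _ hwp hw'p hne').resolve_right hnp⟩
  -- m deviates to the singleton list [w]
  set p' : PrefList W := ⟨[w], List.nodup_singleton w⟩ with hp'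
  set pbar' : M → PrefList W := Function.update pbar m p' with hpbar'
  have hup : pbar' m = p' := Function.update_self m p' pbar
  -- Copt pbar is stable with respect to pbar'
  have hν' : IsStable pbar' qbar (Copt pbar) := by
    rintro (⟨m'', w'', h1, h2⟩ | ⟨m'', w'', heq, hbad⟩)
    · by_cases hm : m'' = m
      · subst hm
        rw [hup, hw] at h1
        rcases h1 with hsub | ⟨_, hmem⟩
        · have := hsub.length_le
          simp [hp'] at this
        · exact hmem (List.mem_singleton_self w)
      · rw [hpbar', Function.update_of_ne hm] at h1
        exact hOs (Or.inl ⟨m'', w'', h1, h2⟩)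
    · by_cases hm : m'' = m
      · subst hm
        rw [hw] at heq
        cases Option.some_injective _ heq.symm
        rcases hbad with hb | hb
        · rw [hup] at hb
          exact hb (List.mem_singleton_self _)
        · exact hb (stable_mem hOs hw).2
      · rw [hpbar', Function.update_of_ne hm] at hbad
        exact hOs (Or.inr ⟨m'', w'', heq, hbad⟩)
  -- C pbar' must match m to w, by the rural-hospitals argument
  have hCs' : IsStable pbar' qbar (C pbar') := hstable pbar'
  have hmatched : (C pbar').toFun m = some w := by
    cases hc : (C pbar').toFun m with
    | none => exact absurd (rural pbar' qbar (C pbar') (Copt pbar) hCs' hν' m w hw hc) id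
    | some w' =>
      have hmem : w' ∈ (pbar' m).val := (stable_mem hCs' hc).1
      rw [hup] at hmem
      exact congrArg some (List.mem_singleton.mp hmem)
  -- contradiction with strategy-proofness
  apply hsp m pbar p'
  rw [← hpbar', hmatched]
  exact hpref
end

section
/- Suppose |M| = |W|, every woman's preference list is full (ranks all of M), and all women share the same preference list, i.e., q̄ = (q)_{w∈W} for some q ∈ P(M). Then the M-optimal stable matching rule C^q̄ is OSP-implementable (in particular, by the sequential serial dictatorship mechanism in which men, in the order given by q, each pick their favorite remaining woman). -/
namespace AlignedOSP

variable {M W : Type}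

lemma prefers_irrefl (p : PrefList W) {x : W} : ¬ prefers p x x := by
  rintro (h | ⟨h1, h2⟩)
  · have := p.2.sublist h
    simp at this
  · exact h2 h1

lemma pair_sublist {α : Type} {x y : α} {l : List α} (hx : x ∈ l) (hy : y ∈ l)
    (hxy : x ≠ y) : [x, y].Sublist l ∨ [y, x].Sublist l := by
  induction l with
  | nil => simp at hx
  | cons a t ih =>
    rcases List.mem_cons.1 hx with rfl | hx'
    · have hyt : y ∈ t := by
        rcases List.mem_cons.1 hy with rfl | hy'
        · exact absurd rfl hxy
        · exact hy'
      exact Or.inl ((List.singleton_sublist.2 hyt).cons₂ x)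
    · rcases List.mem_cons.1 hy with rfl | hy'
      · exact Or.inr ((List.singleton_sublist.2 hx').cons₂ y)
      · exact (ih hx' hy').imp (·.cons a) (·.cons a)

/-- `o` is the first element of `p` satisfying `A` (or `none` if no element of `p`
satisfies `A`). -/
def charAt (p : PrefList W) (A : W → Prop) : Option W → Prop
  | some w => w ∈ p.val ∧ A w ∧ ∀ w', [w', w].Sublist p.val → ¬ A w'
  | none => ∀ w ∈ p.val, ¬ A w

lemma char_unique (p : PrefList W) {A B : W → Prop} (hAB : ∀ w, A w ↔ B w)
    {o o' : Option W} (h : charAt p A o) (h' : charAt p B o') : o = o' := by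
  match o, o', h, h' with
  | none, none, _, _ => rfl
  | some w, none, ⟨hw, hA, _⟩, h' => exact absurd ((hAB w).1 hA) (h' w hw)
  | none, some w', h, ⟨hw', hB, _⟩ => exact absurd ((hAB w').2 hB) (h w' hw')
  | some w, some w', ⟨hw, hA, hmin⟩, ⟨hw', hB, hmin'⟩ =>
    by_cases e : w = w'
    · rw [e]
    · rcases pair_sublist hw hw' e with hs | hs
      · exact absurd ((hAB w).1 hA) (hmin' w hs)
      · exact absurd ((hAB w').2 hB) (hmin w' hs)

/-- Under aligned full women's preferences, any stable matching gives each man `m` the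
first woman on his list not taken by a man earlier on `q`. -/
lemma stable_char (q : PrefList M) (hfull : IsFull q)
    {pbar : M → PrefList W} {μ : Matching M W} (hst : IsStable pbar (fun _ : W => q) μ)
    {l1 l2 : List M} {m : M} (hq : q.val = l1 ++ m :: l2) :
    charAt (pbar m) (fun w => ∀ m' ∈ l1, μ.toFun m' ≠ some w) (μ.toFun m) := by
  have hnd : (l1 ++ m :: l2).Nodup := hq ▸ q.2
  have hdisj := List.disjoint_of_nodup_append hnd
  have hm1 : m ∉ l1 := fun h => hdisj h (List.mem_cons_self : m ∈ m :: l2)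
  have noblock : ∀ w, w ∈ (pbar m).val → (∀ m' ∈ l1, μ.toFun m' ≠ some w) →
      ¬ outPrefers (pbar m) (some w) (μ.toFun m) := by
    intro w hw hA hout
    apply hst
    left
    refine ⟨m, w, hout, ?_⟩
    by_cases hex : ∃ m'', μ.toFun m'' = some w
    · obtain ⟨m'', hm''⟩ := hex
      have hmm : m'' ≠ m := by
        rintro rfl
        rw [hm''] at hout
        exact prefers_irrefl (pbar m'') hout
      have hm''l2 : m'' ∈ l2 := by
        have hmem : m'' ∈ q.val := hfull m''
        rw [hq] at hmem
        rcases List.mem_append.1 hmem with h | h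
        · exact absurd hm'' (hA m'' h)
        · rcases List.mem_cons.1 h with h | h
          · exact absurd h hmm
          · exact h
      refine Or.inl ⟨m'', hm'', Or.inl ?_⟩
      rw [hq]
      exact ((List.singleton_sublist.2 hm''l2).cons₂ m).trans (List.sublist_append_right l1 _)
    · push_neg at hex
      exact Or.inr ⟨hex, hfull m⟩
  rcases hcase : μ.toFun m with _ | w0
  · intro w hw hA
    refine noblock w hw hA ?_
    rw [hcase]
    exact hw
  · have hw0 : w0 ∈ (pbar m).val := by
      by_contra h
      exact hst (Or.inr ⟨m, w0, hcase, Or.inl h⟩)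
    refine ⟨hw0, ?_, ?_⟩
    · intro m' hm' heq
      exact hm1 (μ.inj heq hcase ▸ hm')
    · intro w' hsub hA'
      have hw' : w' ∈ (pbar m).val := hsub.subset (by simp)
      refine noblock w' hw' hA' ?_
      rw [hcase]
      exact Or.inl hsub

lemma matches_agree (q : PrefList M) (hfull : IsFull q)
    (C : (M → PrefList W) → Matching M W)
    (hC : ∀ pbar, IsStable pbar (fun _ : W => q) (C pbar))
    (u v : M → PrefList W) :
    ∀ (l1 l2 : List M), q.val = l1 ++ l2 → (∀ x ∈ l1, u x = v x) →
      ∀ x ∈ l1, (C u).toFun x = (C v).toFun x := by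
  intro l1
  induction l1 using List.reverseRecOn with
  | nil => intro l2 _ _ x hx; simp at hx
  | append_singleton l a ih =>
    intro l2 hq hagree x hx
    have hq' : q.val = l ++ (a :: l2) := by rw [hq, List.append_assoc]; rfl
    have hagree' : ∀ y ∈ l, u y = v y := fun y hy => hagree y (by simp [hy])
    rcases List.mem_append.1 hx with hx' | hx'
    · exact ih (a :: l2) hq' hagree' x hx'
    · have hxa : x = a := by simpa using hx'
      subst hxa
      have hmm : ∀ m' ∈ l, (C u).toFun m' = (C v).toFun m' := ih (x :: l2) hq' hagree'
      have hcu := stable_char q hfull (hC u) hq'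
      have hcv := stable_char q hfull (hC v) hq'
      have huv : u x = v x := hagree x (by simp)
      rw [← huv] at hcv
      refine char_unique (u x) (A := fun w => ∀ m' ∈ l, (C u).toFun m' ≠ some w)
        (B := fun w => ∀ m' ∈ l, (C v).toFun m' ≠ some w) ?_ hcu hcv
      intro w
      constructor
      · intro h m' hm'
        rw [← hmm m' hm']
        exact h m' hm'
      · intro h m' hm'
        rw [hmm m' hm']
        exact h m' hm'

lemma main_claim (q : PrefList M) (hfull : IsFull q)
    (C : (M → PrefList W) → Matching M W)
    (hC : ∀ pbar, IsStable pbar (fun _ : W => q) (C pbar))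
    (u v : M → PrefList W) {l1 l2 : List M} {m : M}
    (hq : q.val = l1 ++ m :: l2) (hagree : ∀ x ∈ l1, u x = v x) :
    ¬ outPrefers (u m) ((C v).toFun m) ((C u).toFun m) := by
  have hmm : ∀ m' ∈ l1, (C u).toFun m' = (C v).toFun m' :=
    matches_agree q hfull C hC u v l1 (m :: l2) hq hagree
  have hcu := stable_char q hfull (hC u) hq
  have hcv := stable_char q hfull (hC v) hq
  rcases h1 : (C u).toFun m with _ | w0 <;> rcases h2 : (C v).toFun m with _ | w1 <;>
    rw [h1] at hcu <;> rw [h2] at hcv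
  · intro h; exact h
  · obtain ⟨hw1, hB, _⟩ := hcv
    have hA : ∀ m' ∈ l1, (C u).toFun m' ≠ some w1 := by
      intro m' hm'
      rw [hmm m' hm']
      exact hB m' hm'
    intro h
    exact hcu w1 h hA
  · intro h
    exact h hcu.1
  · obtain ⟨hw0, hA0, hmin⟩ := hcu
    obtain ⟨hw1, hB, _⟩ := hcv
    have hA : ∀ m' ∈ l1, (C u).toFun m' ≠ some w1 := by
      intro m' hm'
      rw [hmm m' hm']
      exact hB m' hm'
    rintro (hs | ⟨_, h2'⟩)
    · exact hmin w1 hs hA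
    · exact h2' hw0

variable [DecidableEq M]

/-- Overwrite `g` with `h` on members of `l`. -/
def owr (l : List M) (h g : M → PrefList W) : M → PrefList W :=
  fun x => if x ∈ l then h x else g x

/-- The full-revelation mechanism querying the men in `l`, with `g` storing the
answers so far. -/
def mech (C : (M → PrefList W) → Matching M W) : List M → (M → PrefList W) → Mech M W
  | [], g => .leaf (C g)
  | m :: rest, g => .node m fun p => mech C rest (Function.update g m p)

lemma owr_cons (m : M) (rest : List M) (h g : M → PrefList W) :
    owr rest h (Function.update g m (h m)) = owr (m :: rest) h g := by
  funext x
  by_cases h1 : x ∈ rest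
  · simp [owr, h1]
  · by_cases h2 : x = m
    · subst h2
      simp [owr, h1]
    · simp [owr, h1, h2, Function.update_of_ne h2]

lemma mech_run (C : (M → PrefList W) → Matching M W) (l : List M)
    (g h : M → PrefList W) : (mech C l g).run h = C (owr l h g) := by
  induction l generalizing g with
  | nil =>
    show C g = C (owr [] h g)
    congr 1
  | cons m rest ih =>
    show (mech C rest (Function.update g m (h m))).run h = _
    rw [ih, owr_cons]

lemma mech_osp (q : PrefList M) (hfull : IsFull q)
    (C : (M → PrefList W) → Matching M W)
    (hC : ∀ pbar, IsStable pbar (fun _ : W => q) (C pbar)) (m : M) :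
    ∀ (l l1 : List M), q.val = l1 ++ l → ∀ (g : M → PrefList W)
      (P : Set (M → PrefList W)), Mech.OSPAux m (mech C l g) P := by
  intro l
  induction l with
  | nil => intro l1 hq g P; trivial
  | cons m' rest ih =>
    intro l1 hq g P
    refine ⟨?_, ?_⟩
    · intro he u hu v hv _
      subst he
      have hrun : ∀ z : M → PrefList W,
          (mech C rest (Function.update g m' (z m'))).run z = C (owr (m' :: rest) z g) := by
        intro z
        rw [mech_run, owr_cons]
      show ¬ outPrefers (u m')
        (((mech C rest (Function.update g m' (v m'))).run v).toFun m')
        (((mech C rest (Function.update g m' (u m'))).run u).toFun m')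
      rw [hrun u, hrun v]
      have hnd : (l1 ++ m' :: rest).Nodup := hq ▸ q.2
      have hdisj := List.disjoint_of_nodup_append hnd
      have hagree : ∀ x ∈ l1, owr (m' :: rest) u g x = owr (m' :: rest) v g x := by
        intro x hx
        have : x ∉ m' :: rest := fun h => hdisj hx h
        simp [owr, this]
      have hm : owr (m' :: rest) u g m' = u m' := by simp [owr]
      have := main_claim q hfull C hC (owr (m' :: rest) u g) (owr (m' :: rest) v g)
        hq hagree
      rwa [hm] at this
    · intro p
      exact ih (l1 ++ [m']) (by rw [hq, List.append_assoc]; rfl) _ _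

end AlignedOSP

/-- If `|M| = |W|`, every woman's preference list is full, and all women
share the same preference list `q`, then the M-optimal stable matching rule is
OSP-implementable. -/
theorem mOptimal_OSPImplementable_of_alignedPrefs
    {M W : Type} [Fintype M] [Fintype W] [DecidableEq M]
    (hcard : Fintype.card M = Fintype.card W)
    (q : PrefList M) (hfull : IsFull q)
    (C : (M → PrefList W) → Matching M W)
    (hC : IsMOptimalStableRule (fun _ : W => q) C) :
    OSPImplementable C := by
  classical
  refine ⟨AlignedOSP.mech C q.val (fun _ => ⟨[], List.nodup_nil⟩), ?_, ?_⟩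
  · intro m
    exact AlignedOSP.mech_osp q hfull C (fun pbar => (hC pbar).1) m q.val [] rfl _ Set.univ
  · intro pbar
    rw [AlignedOSP.mech_run]
    congr 1
    funext x
    simp [AlignedOSP.owr, hfull x]
end

section
/- Suppose |M| = |W| = 2 and every woman's preference list is full (ranks all of M). Then for every profile q̄ ∈ P(M)^W, the M-optimal stable matching rule C^q̄ is OSP-implementable. -/
namespace OSP2x2

open scoped Classical

lemma head?_cons' {α : Type} {l : List α} {c : α} (hp : l.head? = some c) : ∃ t, l = c :: t := by
  cases l with
  | nil => simp at hp
  | cons a t =>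
    simp at hp
    exact ⟨t, by rw [hp]⟩

lemma head_mem' {α : Type} {l : List α} {c : α} (hp : l.head? = some c) : c ∈ l := by
  obtain ⟨t, rfl⟩ := head?_cons' hp; simp

lemma prefers_irrefl {α : Type} (p : PrefList α) (w : α) : ¬ prefers p w w := by
  rintro (h | ⟨h1, h2⟩)
  · have : ([w, w] : List α).Nodup := p.2.sublist h
    simp at this
  · exact h2 h1

lemma head_not_prefers {α : Type} (p : PrefList α) {w : α} (hp : p.val.head? = some w)
    (u : α) : ¬ prefers p u w := by
  obtain ⟨t, hval⟩ := head?_cons' hp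
  have hnd := p.2
  rw [hval] at hnd
  have hwt : w ∉ t := (List.nodup_cons.mp hnd).1
  rintro (h | ⟨h1, h2⟩)
  · rw [hval] at h
    cases h with
    | cons _ h' => exact hwt (h'.subset (by simp))
    | cons_cons _ h' => exact hwt (h'.subset (by simp))
  · exact h2 (by rw [hval]; simp)

lemma head_best {α : Type} (p : PrefList α) (o : Option α) :
    ¬ outPrefers p o p.val.head? := by
  cases hv : p.val.head? with
  | none =>
    have hnil : p.val = [] := List.head?_eq_none_iff.mp hv
    cases o with
    | none => intro h; exact h
    | some w => intro h; have hh : w ∈ p.val := h; rw [hnil] at hh; simp at hh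
  | some c =>
    cases o with
    | none => intro h; exact h (head_mem' hv)
    | some w => exact head_not_prefers p hv w

lemma opt_head {α : Type} (p : PrefList α) (w : α) (o : Option α)
    (hp : p.val.head? = some w)
    (hfeas : ∀ w', o = some w' → w' ∈ p.val)
    (hopt : ¬ outPrefers p (some w) o) : o = some w := by
  obtain ⟨t, hval⟩ := head?_cons' hp
  cases o with
  | none => exact absurd (show outPrefers p (some w) none from head_mem' hp) hopt
  | some w' =>
    rcases eq_or_ne w' w with rfl | hne
    · rfl
    · exfalso
      have hmem : w' ∈ t := by
        have h := hfeas w' rfl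
        rw [hval] at h
        rcases List.mem_cons.mp h with h | h
        · exact absurd h hne
        · exact h
      exact hopt (Or.inl (by
        rw [hval]
        exact List.cons_sublist_cons.mpr (List.singleton_sublist.mpr hmem)))

lemma sp_single {α : Type} (w₀ : α) (q q' : PrefList α) :
    ¬ outPrefers q (if w₀ ∈ q'.val then some w₀ else none)
      (if w₀ ∈ q.val then some w₀ else none) := by
  by_cases h1 : w₀ ∈ q.val <;> by_cases h2 : w₀ ∈ q'.val <;>
    simp only [if_pos, if_neg, h1, h2, if_true, if_false]
  · exact prefers_irrefl q w₀
  · intro h; exact h h1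
  · intro h; exact h1 (h : w₀ ∈ q.val)
  · intro h; exact h

lemma not_out_ifx {α : Type} (x : α) (p : PrefList α) (o' : Option α)
    (h : o' = some x ∨ o' = none) :
    ¬ outPrefers p o' (if x ∈ p.val then some x else none) := by
  by_cases hx : x ∈ p.val <;> rcases h with rfl | rfl <;>
    simp only [if_pos, if_neg, hx, if_true, if_false]
  · exact prefers_irrefl p x
  · intro h; exact h hx
  · intro h; exact hx (h : x ∈ p.val)
  · intro h; exact h

lemma not_out_y {α : Type} (p : PrefList α) {y : α} (hp : p.val.head? = some y)
    (x : α) (o' : Option α) (h : o' = some x ∨ o' = none) :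
    ¬ outPrefers p o' (some y) := by
  rcases h with rfl | rfl
  · exact head_not_prefers p hp x
  · intro h; exact h (head_mem' hp)

lemma prefers_pair {α : Type} (l : PrefList α) (c d : α) (hval : l.val = [c, d]) :
    prefers l c d := by
  left; rw [hval]

lemma not_prefers_pair {α : Type} (l : PrefList α) (c d : α) (hval : l.val = [c, d])
    (hcd : c ≠ d) : ¬ prefers l d c := by
  rintro (h | ⟨h1, h2⟩)
  · rw [hval] at h
    have h2 := h.eq_of_length (by simp)
    simp at h2
    exact hcd h2.1.symm
  · exact h2 (by rw [hval]; simp)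

lemma stable_mem {M W : Type} {pbar : M → PrefList W} {qbar : W → PrefList M}
    {μ : Matching M W} (h : IsStable pbar qbar μ) :
    ∀ m w, μ.toFun m = some w → w ∈ (pbar m).val ∧ m ∈ (qbar w).val := by
  intro m w hm
  by_contra hc
  exact h (Or.inr ⟨m, w, hm, not_and_or.mp hc⟩)

section Constructions

variable {M W : Type} [DecidableEq M]

/-- The men's profile assigning `p` to `u` and `q` to everyone else. -/
def prof (u : M) (p q : PrefList W) : M → PrefList W := fun m => if m = u then p else q

lemma prof_fst (u : M) (p q : PrefList W) : prof u p q u = p := by simp [prof]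

lemma prof_snd {u v : M} (huv : u ≠ v) (p q : PrefList W) : prof u p q v = q := by
  simp [prof, huv.symm]

lemma prof_eq {u v : M} (huv : u ≠ v) (hMu : ∀ m : M, m = u ∨ m = v)
    (pbar : M → PrefList W) : prof u (pbar u) (pbar v) = pbar := by
  funext m
  rcases hMu m with rfl | rfl
  · simp [prof]
  · simp [prof, huv.symm]

/-- Build a matching from the two men's assignments. -/
def mk2 (u v : M) (huv : u ≠ v) (hMu : ∀ m : M, m = u ∨ m = v) (o₁ o₂ : Option W)
    (h : ∀ w, ¬(o₁ = some w ∧ o₂ = some w)) : Matching M W where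
  toFun m := if m = u then o₁ else o₂
  inj := by
    intro m m' w hm hm'
    by_cases h1 : m = u <;> by_cases h2 : m' = u
    · rw [h1, h2]
    · rw [if_pos h1] at hm
      rw [if_neg h2] at hm'
      exact absurd ⟨hm, hm'⟩ (h w)
    · rw [if_neg h1] at hm
      rw [if_pos h2] at hm'
      exact absurd ⟨hm', hm⟩ (h w)
    · have hm1 : m = v := (hMu m).resolve_left h1
      have hm2 : m' = v := (hMu m').resolve_left h2
      rw [hm1, hm2]

lemma mk2_fst (u v : M) (huv : u ≠ v) (hMu : ∀ m : M, m = u ∨ m = v) (o₁ o₂ : Option W)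
    (h : ∀ w, ¬(o₁ = some w ∧ o₂ = some w)) : (mk2 u v huv hMu o₁ o₂ h).toFun u = o₁ := by
  simp [mk2]

lemma mk2_snd (u v : M) (huv : u ≠ v) (hMu : ∀ m : M, m = u ∨ m = v) (o₁ o₂ : Option W)
    (h : ∀ w, ¬(o₁ = some w ∧ o₂ = some w)) : (mk2 u v huv hMu o₁ o₂ h).toFun v = o₂ := by
  simp [mk2, huv.symm]

lemma list_two {a b : M} (hab : a ≠ b) (hMu : ∀ m : M, m = a ∨ m = b)
    (l : List M) (hnd : l.Nodup) (ha : a ∈ l) (hb : b ∈ l) :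
    l = [a, b] ∨ l = [b, a] := by
  cases l with
  | nil => simp at ha
  | cons c t =>
    cases t with
    | nil =>
      simp at ha hb
      exact absurd (ha.trans hb.symm) hab
    | cons d t2 =>
      cases t2 with
      | nil =>
        have hcd : c ≠ d := by simp at hnd; exact hnd
        rcases hMu c with rfl | rfl <;> rcases hMu d with rfl | rfl
        · exact absurd rfl hcd
        · exact Or.inl rfl
        · exact Or.inr rfl
        · exact absurd rfl hcd
      | cons e t3 =>
        exfalso
        simp [List.nodup_cons] at hnd
        rcases hMu c with rfl | rfl <;> rcases hMu d with rfl | rfl <;>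
          rcases hMu e with rfl | rfl <;> tauto

end Constructions

section Stab

variable {M W : Type} [DecidableEq M] (u v : M) (x y : W)
  (qbar : W → PrefList M)

/-- Stability when `u`'s head is `x` and `x` prefers `u` (μ: u-x, v-y if availiable). -/
lemma stab1 (huv : u ≠ v) (hxy : x ≠ y)
    (hMu : ∀ m : M, m = u ∨ m = v) (hWu : ∀ w : W, w = x ∨ w = y) (hqx : (qbar x).val = [u, v]) (hqy : (qbar y).val = [v, u])
    (p q : PrefList W) (hp : p.val.head? = some x)
    (μ : Matching M W) (hμu : μ.toFun u = some x)
    (hμv : μ.toFun v = if y ∈ q.val then some y else none) :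
    IsStable (prof u p q) qbar μ := by
  have hpu : prof u p q u = p := prof_fst u p q
  have hpv : prof u p q v = q := prof_snd huv p q
  rintro (⟨m, w, h1, h2⟩ | ⟨m, w, h1, h2⟩)
  · rcases hMu m with hm | hm <;> rw [hm] at h1 h2
    · rw [hpu, hμu] at h1
      exact head_not_prefers p hp w h1
    · rw [hpv, hμv] at h1
      rcases hWu w with hw | hw <;> rw [hw] at h1 h2
      · rcases h2 with ⟨m', hm', hpref⟩ | ⟨hnone, _⟩
        · rcases hMu m' with hm2 | hm2 <;> rw [hm2] at hm' hpref
          · rw [hμu] at hm'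
            exact not_prefers_pair (qbar x) u v hqx huv hpref
          · rw [hμv] at hm'
            by_cases hy : y ∈ q.val
            · rw [if_pos hy] at hm'
              exact hxy (Option.some.inj hm').symm
            · rw [if_neg hy] at hm'
              exact absurd hm' (by simp)
        · exact hnone u hμu
      · by_cases hy : y ∈ q.val
        · rw [if_pos hy] at h1
          exact prefers_irrefl q y h1
        · rw [if_neg hy] at h1
          exact hy h1
  · rcases hMu m with hm | hm <;> rw [hm] at h1 h2
    · rw [hμu] at h1
      have hw : x = w := Option.some.inj h1
      subst hw
      rw [hpu] at h2
      rcases h2 with h2 | h2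
      · exact h2 (head_mem' hp)
      · exact h2 (by rw [hqx]; simp)
    · rw [hμv] at h1
      by_cases hy : y ∈ q.val
      · rw [if_pos hy] at h1
        have hw : y = w := Option.some.inj h1
        subst hw
        rw [hpv] at h2
        rcases h2 with h2 | h2
        · exact h2 hy
        · exact h2 (by rw [hqy]; simp)
      · rw [if_neg hy] at h1
        exact absurd h1 (by simp)

/-- Stability when both heads are `y` and `y` prefers `v` (μ: v-y, u-x if acceptable). -/
lemma stab2 (huv : u ≠ v) (hxy : x ≠ y)
    (hMu : ∀ m : M, m = u ∨ m = v) (hWu : ∀ w : W, w = x ∨ w = y) (hqx : (qbar x).val = [u, v]) (hqy : (qbar y).val = [v, u])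
    (p q : PrefList W) (hp : p.val.head? = some y) (hq : q.val.head? = some y)
    (μ : Matching M W) (hμu : μ.toFun u = if x ∈ p.val then some x else none)
    (hμv : μ.toFun v = some y) :
    IsStable (prof u p q) qbar μ := by
  have hpu : prof u p q u = p := prof_fst u p q
  have hpv : prof u p q v = q := prof_snd huv p q
  rintro (⟨m, w, h1, h2⟩ | ⟨m, w, h1, h2⟩)
  · rcases hMu m with hm | hm <;> rw [hm] at h1 h2
    · rw [hpu, hμu] at h1
      rcases hWu w with hw | hw <;> rw [hw] at h1 h2
      · by_cases hx : x ∈ p.val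
        · rw [if_pos hx] at h1
          exact prefers_irrefl p x h1
        · rw [if_neg hx] at h1
          exact hx h1
      · rcases h2 with ⟨m', hm', hpref⟩ | ⟨hnone, _⟩
        · rcases hMu m' with hm2 | hm2 <;> rw [hm2] at hm' hpref
          · rw [hμu] at hm'
            by_cases hx : x ∈ p.val
            · rw [if_pos hx] at hm'
              exact hxy (Option.some.inj hm')
            · rw [if_neg hx] at hm'
              exact absurd hm' (by simp)
          · rw [hμv] at hm'
            exact not_prefers_pair (qbar y) v u hqy huv.symm hpref
        · exact hnone v hμv
    · rw [hpv, hμv] at h1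
      exact head_not_prefers q hq w h1
  · rcases hMu m with hm | hm <;> rw [hm] at h1 h2
    · rw [hμu] at h1
      by_cases hx : x ∈ p.val
      · rw [if_pos hx] at h1
        have hw : x = w := Option.some.inj h1
        subst hw
        rw [hpu] at h2
        rcases h2 with h2 | h2
        · exact h2 hx
        · exact h2 (by rw [hqx]; simp)
      · rw [if_neg hx] at h1
        exact absurd h1 (by simp)
    · rw [hμv] at h1
      have hw : y = w := Option.some.inj h1
      subst hw
      rw [hpv] at h2
      rcases h2 with h2 | h2
      · exact h2 (head_mem' hq)
      · exact h2 (by rw [hqy]; simp)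

/-- Stability when `u`'s head is `y` but `q`'s head is not `y` (μ: u-y, v-x if acceptable). -/
lemma stab3 (huv : u ≠ v) (hxy : x ≠ y)
    (hMu : ∀ m : M, m = u ∨ m = v) (hWu : ∀ w : W, w = x ∨ w = y) (hqx : (qbar x).val = [u, v]) (hqy : (qbar y).val = [v, u])
    (p q : PrefList W) (hp : p.val.head? = some y) (hq : q.val.head? ≠ some y)
    (μ : Matching M W) (hμu : μ.toFun u = some y)
    (hμv : μ.toFun v = if x ∈ q.val then some x else none) :
    IsStable (prof u p q) qbar μ := by
  have hpu : prof u p q u = p := prof_fst u p q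
  have hpv : prof u p q v = q := prof_snd huv p q
  have hqhead : ∀ c, q.val.head? = some c → c = x := by
    intro c hc
    rcases hWu c with rfl | rfl
    · rfl
    · exact absurd hc hq
  rintro (⟨m, w, h1, h2⟩ | ⟨m, w, h1, h2⟩)
  · rcases hMu m with hm | hm <;> rw [hm] at h1 h2
    · rw [hpu, hμu] at h1
      exact head_not_prefers p hp w h1
    · rw [hpv, hμv] at h1
      rcases hWu w with hw | hw <;> rw [hw] at h1 h2
      · by_cases hx : x ∈ q.val
        · rw [if_pos hx] at h1
          exact prefers_irrefl q x h1
        · rw [if_neg hx] at h1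
          exact hx h1
      · by_cases hx : x ∈ q.val
        · rw [if_pos hx] at h1
          have hqh : q.val.head? = some x := by
            cases hh : q.val.head? with
            | none =>
              rw [List.head?_eq_none_iff] at hh
              rw [hh] at hx
              simp at hx
            | some c => rw [hqhead c hh]
          exact head_not_prefers q hqh y h1
        · rw [if_neg hx] at h1
          have hy : y ∈ q.val := h1
          cases hh : q.val.head? with
          | none =>
            rw [List.head?_eq_none_iff] at hh
            rw [hh] at hy
            simp at hy
          | some c =>
            have := hqhead c hh
            subst this
            exact hx (head_mem' hh)
  · rcases hMu m with hm | hm <;> rw [hm] at h1 h2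
    · rw [hμu] at h1
      have hw : y = w := Option.some.inj h1
      subst hw
      rw [hpu] at h2
      rcases h2 with h2 | h2
      · exact h2 (head_mem' hp)
      · exact h2 (by rw [hqy]; simp)
    · rw [hμv] at h1
      by_cases hx : x ∈ q.val
      · rw [if_pos hx] at h1
        have hw : x = w := Option.some.inj h1
        subst hw
        rw [hpv] at h2
        rcases h2 with h2 | h2
        · exact h2 hx
        · exact h2 (by rw [hqx]; simp)
      · rw [if_neg hx] at h1
        exact absurd h1 (by simp)

/-- Stability when `u`'s list is empty (μ: u unmatched, v gets his head). -/
lemma stab_nil (huv : u ≠ v) (hMu : ∀ m : M, m = u ∨ m = v) (hvq : ∀ w, v ∈ (qbar w).val)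
    (p q : PrefList W) (hp : p.val = [])
    (μ : Matching M W) (hμu : μ.toFun u = none)
    (hμv : μ.toFun v = q.val.head?) :
    IsStable (prof u p q) qbar μ := by
  have hpu : prof u p q u = p := prof_fst u p q
  have hpv : prof u p q v = q := prof_snd huv p q
  rintro (⟨m, w, h1, h2⟩ | ⟨m, w, h1, h2⟩)
  · rcases hMu m with hm | hm <;> rw [hm] at h1 h2
    · rw [hpu, hμu] at h1
      have : w ∈ p.val := h1
      rw [hp] at this
      simp at this
    · rw [hpv, hμv] at h1
      exact head_best q (some w) h1
  · rcases hMu m with hm | hm <;> rw [hm] at h1 h2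
    · rw [hμu] at h1
      exact absurd h1 (by simp)
    · rw [hμv] at h1
      rw [hpv] at h2
      rcases h2 with h2 | h2
      · exact h2 (head_mem' h1)
      · exact h2 (hvq w)

/-- Stability in the dictatorship case: both women prefer `u`; μ: u gets his head `c`,
v gets the other woman `c'` if acceptable. -/
lemma stab_dict (huv : u ≠ v) (hMu : ∀ m : M, m = u ∨ m = v) (hq : ∀ w, (qbar w).val = [u, v])
    (p q : PrefList W) (c c' : W) (hcc' : c ≠ c') (hWcc : ∀ w : W, w = c ∨ w = c')
    (hp : p.val.head? = some c)
    (μ : Matching M W) (hμu : μ.toFun u = some c)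
    (hμv : μ.toFun v = if c' ∈ q.val then some c' else none) :
    IsStable (prof u p q) qbar μ := by
  have hpu : prof u p q u = p := prof_fst u p q
  have hpv : prof u p q v = q := prof_snd huv p q
  rintro (⟨m, w, h1, h2⟩ | ⟨m, w, h1, h2⟩)
  · rcases hMu m with hm | hm <;> rw [hm] at h1 h2
    · rw [hpu, hμu] at h1
      exact head_not_prefers p hp w h1
    · rw [hpv, hμv] at h1
      rcases hWcc w with hw | hw <;> rw [hw] at h1 h2
      · rcases h2 with ⟨m', hm', hpref⟩ | ⟨hnone, _⟩
        · rcases hMu m' with hm2 | hm2 <;> rw [hm2] at hm' hpref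
          · rw [hμu] at hm'
            exact not_prefers_pair (qbar c) u v (hq c) huv hpref
          · rw [hμv] at hm'
            by_cases hc : c' ∈ q.val
            · rw [if_pos hc] at hm'
              exact hcc' (Option.some.inj hm').symm
            · rw [if_neg hc] at hm'
              exact absurd hm' (by simp)
        · exact hnone u hμu
      · by_cases hc : c' ∈ q.val
        · rw [if_pos hc] at h1
          exact prefers_irrefl q c' h1
        · rw [if_neg hc] at h1
          exact hc h1
  · rcases hMu m with hm | hm <;> rw [hm] at h1 h2
    · rw [hμu] at h1
      have hw : c = w := Option.some.inj h1
      subst hw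
      rw [hpu] at h2
      rcases h2 with h2 | h2
      · exact h2 (head_mem' hp)
      · exact h2 (by rw [hq c]; simp)
    · rw [hμv] at h1
      by_cases hc : c' ∈ q.val
      · rw [if_pos hc] at h1
        have hw : c' = w := Option.some.inj h1
        subst hw
        rw [hpv] at h2
        rcases h2 with h2 | h2
        · exact h2 hc
        · exact h2 (by rw [hq c']; simp)
      · rw [if_neg hc] at h1
        exact absurd h1 (by simp)

end Stab

section Facts

variable {M W : Type} [DecidableEq M] (u v : M) (x y : W)
  (qbar : W → PrefList M) (C : (M → PrefList W) → Matching M W)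

/-- Characterization of the M-optimal stable rule in the "opposing favorites" case:
`x` prefers `u`, `y` prefers `v`. -/
lemma factB (huv : u ≠ v) (hxy : x ≠ y)
    (hMu : ∀ m : M, m = u ∨ m = v) (hWu : ∀ w : W, w = x ∨ w = y)
    (hqx : (qbar x).val = [u, v]) (hqy : (qbar y).val = [v, u])
    (hC : IsMOptimalStableRule qbar C) (p q : PrefList W) :
    ((C (prof u p q)).toFun u =
      (if p.val.head? = some x then some x else
       if p.val.head? = some y then
        (if q.val.head? = some y then (if x ∈ p.val then some x else none) else some y)
       else none)) ∧
    ((C (prof u p q)).toFun v =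
      (if p.val.head? = some x then (if y ∈ q.val then some y else none)
       else q.val.head?)) := by
  have hvq : ∀ w, v ∈ (qbar w).val := by
    intro w
    rcases hWu w with rfl | rfl
    · rw [hqx]; simp
    · rw [hqy]; simp
  obtain ⟨hS, hOpt⟩ := hC (prof u p q)
  have hpu : prof u p q u = p := prof_fst u p q
  have hpv : prof u p q v = q := prof_snd huv p q
  have hfeasu : ∀ w', (C (prof u p q)).toFun u = some w' → w' ∈ p.val := by
    intro w' hw'
    have := (stable_mem hS u w' hw').1
    rwa [hpu] at this
  have hfeasv : ∀ w', (C (prof u p q)).toFun v = some w' → w' ∈ q.val := by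
    intro w' hw'
    have := (stable_mem hS v w' hw').1
    rwa [hpv] at this
  by_cases hpx : p.val.head? = some x
  · -- u's head is x, and x prefers u: u gets x.
    rw [if_pos hpx, if_pos hpx]
    have hdisj : ∀ w, ¬((some x : Option W) = some w ∧
        (if y ∈ q.val then some y else none) = some w) := by
      intro w hw
      by_cases hy : y ∈ q.val
      · rw [if_pos hy] at hw
        exact hxy (Option.some.inj (hw.1.trans hw.2.symm))
      · rw [if_neg hy] at hw
        exact absurd hw.2 (by simp)
    have hstab := stab1 u v x y qbar huv hxy hMu hWu hqx hqy p q hpx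
      (mk2 u v huv hMu (some x) (if y ∈ q.val then some y else none) hdisj)
      (mk2_fst _ _ _ _ _ _ _) (mk2_snd _ _ _ _ _ _ _)
    have hopt := hOpt _ hstab u
    rw [hpu, mk2_fst] at hopt
    have hCu : (C (prof u p q)).toFun u = some x := opt_head p x _ hpx hfeasu hopt
    refine ⟨hCu, ?_⟩
    by_cases hy : y ∈ q.val
    · rw [if_pos hy]
      cases hv : (C (prof u p q)).toFun v with
      | none =>
        exfalso
        apply hS
        left
        refine ⟨v, y, ?_, ?_⟩
        · rw [hpv, hv]
          exact hy
        · right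
          constructor
          · intro m'
            rcases hMu m' with rfl | rfl
            · rw [hCu]
              simp [hxy]
            · rw [hv]
              simp
          · rw [hqy]; simp
      | some w =>
        rcases hWu w with rfl | rfl
        · exact absurd ((C (prof u p q)).inj hCu hv) huv
        · rfl
    · rw [if_neg hy]
      cases hv : (C (prof u p q)).toFun v with
      | none => rfl
      | some w =>
        exfalso
        rcases hWu w with rfl | rfl
        · exact absurd ((C (prof u p q)).inj hCu hv) huv
        · exact hy (hfeasv _ hv)
  · rw [if_neg hpx, if_neg hpx]
    by_cases hpy : p.val.head? = some y
    · rw [if_pos hpy]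
      by_cases hqhy : q.val.head? = some y
      · -- both heads y; y prefers v: v gets y, u gets x if acceptable.
        rw [if_pos hqhy]
        have hdisj : ∀ w, ¬((if x ∈ p.val then some x else none) = some w ∧
            (some y : Option W) = some w) := by
          intro w hw
          by_cases hx : x ∈ p.val
          · rw [if_pos hx] at hw
            exact hxy (Option.some.inj (hw.1.trans hw.2.symm))
          · rw [if_neg hx] at hw
            exact absurd hw.1 (by simp)
        have hstab := stab2 u v x y qbar huv hxy hMu hWu hqx hqy p q hpy hqhy
          (mk2 u v huv hMu (if x ∈ p.val then some x else none) (some y) hdisj)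
          (mk2_fst _ _ _ _ _ _ _) (mk2_snd _ _ _ _ _ _ _)
        have hopt := hOpt _ hstab v
        rw [hpv, mk2_snd] at hopt
        have hCv : (C (prof u p q)).toFun v = some y := opt_head q y _ hqhy hfeasv hopt
        refine ⟨?_, by rw [hCv, hqhy]⟩
        by_cases hx : x ∈ p.val
        · rw [if_pos hx]
          cases hu : (C (prof u p q)).toFun u with
          | none =>
            exfalso
            apply hS
            left
            refine ⟨u, x, ?_, ?_⟩
            · rw [hpu, hu]
              exact hx
            · right
              constructor
              · intro m'
                rcases hMu m' with rfl | rfl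
                · rw [hu]; simp
                · rw [hCv]
                  simp [hxy.symm]
              · rw [hqx]; simp
          | some w =>
            rcases hWu w with rfl | rfl
            · rfl
            · exact absurd ((C (prof u p q)).inj hu hCv) huv
        · rw [if_neg hx]
          cases hu : (C (prof u p q)).toFun u with
          | none => rfl
          | some w =>
            exfalso
            rcases hWu w with rfl | rfl
            · exact hx (hfeasu _ hu)
            · exact absurd ((C (prof u p q)).inj hu hCv) huv
      · -- u's head is y, v's head isn't: u gets y, v gets rest.
        rw [if_neg hqhy]
        have hdisj : ∀ w, ¬((some y : Option W) = some w ∧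
            (if x ∈ q.val then some x else none) = some w) := by
          intro w hw
          by_cases hx : x ∈ q.val
          · rw [if_pos hx] at hw
            exact hxy (Option.some.inj (hw.2.trans hw.1.symm))
          · rw [if_neg hx] at hw
            exact absurd hw.2 (by simp)
        have hstab := stab3 u v x y qbar huv hxy hMu hWu hqx hqy p q hpy hqhy
          (mk2 u v huv hMu (some y) (if x ∈ q.val then some x else none) hdisj)
          (mk2_fst _ _ _ _ _ _ _) (mk2_snd _ _ _ _ _ _ _)
        have hopt := hOpt _ hstab u
        rw [hpu, mk2_fst] at hopt
        have hCu : (C (prof u p q)).toFun u = some y := opt_head p y _ hpy hfeasu hopt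
        refine ⟨hCu, ?_⟩
        cases hqh : q.val.head? with
        | none =>
          cases hv : (C (prof u p q)).toFun v with
          | none => rfl
          | some w =>
            exfalso
            have := hfeasv _ hv
            rw [List.head?_eq_none_iff.mp hqh] at this
            simp at this
        | some c =>
          have hcx : c = x := by
            rcases hWu c with rfl | rfl
            · rfl
            · exact absurd hqh hqhy
          rw [hcx] at hqh
          have hx : x ∈ q.val := head_mem' hqh
          cases hv : (C (prof u p q)).toFun v with
          | none =>
            exfalso
            apply hS
            left
            refine ⟨v, x, ?_, ?_⟩
            · rw [hpv, hv]
              exact hx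
            · right
              constructor
              · intro m'
                rcases hMu m' with rfl | rfl
                · rw [hCu]
                  simp [hxy.symm]
                · rw [hv]; simp
              · rw [hqx]; simp
          | some w =>
            rcases hWu w with rfl | rfl
            · rw [hcx]
            · exact absurd ((C (prof u p q)).inj hv hCu) huv.symm
    · -- p is empty.
      rw [if_neg hpy]
      have hpnil : p.val = [] := by
        cases hh : p.val.head? with
        | none => exact List.head?_eq_none_iff.mp hh
        | some c =>
          exfalso
          rcases hWu c with rfl | rfl
          · exact hpx hh
          · exact hpy hh
      have hCu : (C (prof u p q)).toFun u = none := by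
        cases hu : (C (prof u p q)).toFun u with
        | none => rfl
        | some w =>
          exfalso
          have := hfeasu _ hu
          rw [hpnil] at this
          simp at this
      refine ⟨hCu, ?_⟩
      cases hqh : q.val.head? with
      | none =>
        cases hv : (C (prof u p q)).toFun v with
        | none => rfl
        | some w =>
          exfalso
          have := hfeasv _ hv
          rw [List.head?_eq_none_iff.mp hqh] at this
          simp at this
      | some c =>
        have hdisj : ∀ w, ¬((none : Option W) = some w ∧ (some c : Option W) = some w) := by
          intro w hw
          exact absurd hw.1 (by simp)
        have hstab := stab_nil u v qbar huv hMu hvq p q hpnil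
          (mk2 u v huv hMu none (some c) hdisj)
          (mk2_fst _ _ _ _ _ _ _) (by rw [mk2_snd, hqh])
        have hopt := hOpt _ hstab v
        rw [hpv, mk2_snd] at hopt
        exact opt_head q c _ hqh hfeasv hopt

/-- Characterization of the M-optimal stable rule in the dictatorship case:
both women prefer `u`. -/
lemma factD (huv : u ≠ v) (hxy : x ≠ y)
    (hMu : ∀ m : M, m = u ∨ m = v) (hWu : ∀ w : W, w = x ∨ w = y)
    (hq : ∀ w, (qbar w).val = [u, v])
    (hC : IsMOptimalStableRule qbar C) (p q : PrefList W) :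
    ((C (prof u p q)).toFun u = p.val.head?) ∧
    ((C (prof u p q)).toFun v = p.val.head?.elim q.val.head?
      (fun c => if (if c = x then y else x) ∈ q.val then some (if c = x then y else x)
                else none)) := by
  have hvq : ∀ w, v ∈ (qbar w).val := by
    intro w; rw [hq w]; simp
  obtain ⟨hS, hOpt⟩ := hC (prof u p q)
  have hpu : prof u p q u = p := prof_fst u p q
  have hpv : prof u p q v = q := prof_snd huv p q
  have hfeasu : ∀ w', (C (prof u p q)).toFun u = some w' → w' ∈ p.val := by
    intro w' hw'
    have := (stable_mem hS u w' hw').1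
    rwa [hpu] at this
  have hfeasv : ∀ w', (C (prof u p q)).toFun v = some w' → w' ∈ q.val := by
    intro w' hw'
    have := (stable_mem hS v w' hw').1
    rwa [hpv] at this
  cases hph : p.val.head? with
  | none =>
    have hpnil : p.val = [] := List.head?_eq_none_iff.mp hph
    have hCu : (C (prof u p q)).toFun u = none := by
      cases hu : (C (prof u p q)).toFun u with
      | none => rfl
      | some w =>
        exfalso
        have := hfeasu _ hu
        rw [hpnil] at this
        simp at this
    refine ⟨hCu, ?_⟩
    simp only [Option.elim]
    cases hqh : q.val.head? with
    | none =>
      cases hv : (C (prof u p q)).toFun v with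
      | none => rfl
      | some w =>
        exfalso
        have := hfeasv _ hv
        rw [List.head?_eq_none_iff.mp hqh] at this
        simp at this
    | some c =>
      have hdisj : ∀ w, ¬((none : Option W) = some w ∧ (some c : Option W) = some w) := by
        intro w hw
        exact absurd hw.1 (by simp)
      have hstab := stab_nil u v qbar huv hMu hvq p q hpnil
        (mk2 u v huv hMu none (some c) hdisj)
        (mk2_fst _ _ _ _ _ _ _) (by rw [mk2_snd, hqh])
      have hopt := hOpt _ hstab v
      rw [hpv, mk2_snd] at hopt
      exact opt_head q c _ hqh hfeasv hopt
  | some c =>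
    -- u gets his head c; v gets the other woman c' if acceptable.
    have hccWcc : ∃ c' : W, c ≠ c' ∧ (∀ w : W, w = c ∨ w = c') ∧
        (if c = x then y else x) = c' := by
      rcases hWu c with rfl | rfl
      · exact ⟨y, hxy, fun w => hWu w, by simp⟩
      · refine ⟨x, hxy.symm, fun w => (hWu w).symm, ?_⟩
        rw [if_neg hxy.symm]
    obtain ⟨c', hcc', hWcc, hco⟩ := hccWcc
    have hdisj : ∀ w, ¬((some c : Option W) = some w ∧
        (if c' ∈ q.val then some c' else none) = some w) := by
      intro w hw
      by_cases hc : c' ∈ q.val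
      · rw [if_pos hc] at hw
        exact hcc' (Option.some.inj (hw.1.trans hw.2.symm))
      · rw [if_neg hc] at hw
        exact absurd hw.2 (by simp)
    have hstab := stab_dict u v qbar huv hMu hq p q c c' hcc' hWcc hph
      (mk2 u v huv hMu (some c) (if c' ∈ q.val then some c' else none) hdisj)
      (mk2_fst _ _ _ _ _ _ _) (mk2_snd _ _ _ _ _ _ _)
    have hopt := hOpt _ hstab u
    rw [hpu, mk2_fst] at hopt
    have hCu : (C (prof u p q)).toFun u = some c := opt_head p c _ hph hfeasu hopt
    refine ⟨hCu, ?_⟩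
    simp only [Option.elim]
    rw [hco]
    by_cases hc : c' ∈ q.val
    · rw [if_pos hc]
      cases hv : (C (prof u p q)).toFun v with
      | none =>
        exfalso
        apply hS
        left
        refine ⟨v, c', ?_, ?_⟩
        · rw [hpv, hv]
          exact hc
        · right
          constructor
          · intro m'
            rcases hMu m' with rfl | rfl
            · rw [hCu]
              simp [hcc']
            · rw [hv]; simp
          · rw [hq c']; simp
      | some w =>
        rcases hWcc w with rfl | rfl
        · exact absurd ((C (prof u p q)).inj hCu hv) huv
        · rfl
    · rw [if_neg hc]
      cases hv : (C (prof u p q)).toFun v with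
      | none => rfl
      | some w =>
        exfalso
        rcases hWcc w with rfl | rfl
        · exact absurd ((C (prof u p q)).inj hCu hv) huv
        · exact hc (hfeasv _ hv)

end Facts

section Mechs

variable {M W : Type} [DecidableEq M]

/-- The finishing subtree: ask `u` everything, then ask `v` everything, output `C`. -/
def Tfin (u v : M) (C : (M → PrefList W) → Matching M W) : Mech M W :=
  .node u fun p => .node v fun q => .leaf (C (prof u p q))

lemma Tfin_run (u v : M) (huv : u ≠ v) (hMu : ∀ m : M, m = u ∨ m = v)
    (C : (M → PrefList W) → Matching M W) (pbar : M → PrefList W) :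
    (Tfin u v C).run pbar = C pbar := by
  show (C (prof u (pbar u) (pbar v))) = C pbar
  rw [prof_eq huv hMu]

lemma ospT_aux (u v : M) (C : (M → PrefList W) → Matching M W)
    (m : M) (P : Set (M → PrefList W))
    (hU : m = u → ∀ pbar ∈ P, ∀ pbar' ∈ P,
      ¬ outPrefers (pbar u) ((C (prof u (pbar' u) (pbar' v))).toFun u)
        ((C (prof u (pbar u) (pbar v))).toFun u))
    (hV : m = v → ∀ (p qq qq' : PrefList W),
      ¬ outPrefers qq ((C (prof u p qq')).toFun v) ((C (prof u p qq)).toFun v)) :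
    Mech.OSPAux m (Tfin u v C) P := by
  refine ⟨?_, ?_⟩
  · intro hum pbar hp pbar' hp' _
    subst hum
    exact hU rfl pbar hp pbar' hp'
  · intro p
    refine ⟨?_, fun q => trivial⟩
    intro hvm pbar hp pbar' hp' _
    subst hvm
    exact hV rfl p (pbar v) (pbar' v)

/-- OSP implementation in the dictatorship case. -/
lemma dict_OSP (u v : M) (x y : W) (huv : u ≠ v) (hxy : x ≠ y)
    (hMu : ∀ m : M, m = u ∨ m = v) (hWu : ∀ w : W, w = x ∨ w = y)
    (qbar : W → PrefList M) (hq : ∀ w, (qbar w).val = [u, v])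
    (C : (M → PrefList W) → Matching M W)
    (hC : IsMOptimalStableRule qbar C) : OSPImplementable C := by
  refine ⟨Tfin u v C, ?_, fun pbar => Tfin_run u v huv hMu C pbar⟩
  intro m
  apply ospT_aux u v C m Set.univ
  · intro _ pbar _ pbar' _
    rw [(factD u v x y qbar C huv hxy hMu hWu hq hC (pbar u) (pbar v)).1,
      (factD u v x y qbar C huv hxy hMu hWu hq hC (pbar' u) (pbar' v)).1]
    exact head_best _ _
  · intro _ p qq qq'
    rw [(factD u v x y qbar C huv hxy hMu hWu hq hC p qq).2,
      (factD u v x y qbar C huv hxy hMu hWu hq hC p qq').2]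
    cases hh : p.val.head? with
    | none =>
      simp only [Option.elim]
      exact head_best qq _
    | some c =>
      simp only [Option.elim]
      exact sp_single _ qq qq'

end Mechs

section CaseB

variable {M W : Type} [DecidableEq M]

/-- Subtree of the case-B mechanism offered when `u`'s head is not `y`. -/
def A2mech (u v : M) (C : (M → PrefList W) → Matching M W) : Mech M W :=
  .node v fun _ => Tfin u v C

/-- Subtree of the case-B mechanism offered when `u`'s head is `y`. -/
noncomputable def A1mech (u v : M) (y : W) (C : (M → PrefList W) → Matching M W) : Mech M W :=
  .node v fun q =>
    if q.val.head? = some y then .node v (fun _ => Tfin u v C) else Tfin u v C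

/-- The case-B mechanism. -/
noncomputable def IB (u v : M) (y : W) (C : (M → PrefList W) → Matching M W) : Mech M W :=
  .node u fun p => if p.val.head? = some y then A1mech u v y C else A2mech u v C

lemma dummy_ne_Tfin (u v : M) (C : (M → PrefList W) → Matching M W) (huv : u ≠ v) :
    Mech.node v (fun _ : PrefList W => Tfin u v C) ≠ Tfin u v C := by
  intro h
  rw [Tfin] at h
  injection h with h1 _
  exact huv h1.symm

lemma A1_ne_A2 (u v : M) (y : W) (C : (M → PrefList W) → Matching M W) (huv : u ≠ v) :
    A1mech u v y C ≠ A2mech u v C := by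
  intro h
  rw [A1mech, A2mech] at h
  injection h with _ h2
  have h3 := congrFun h2 ⟨[y], by simp⟩
  simp only at h3
  rw [if_pos (show (([y] : List W)).head? = some y from rfl)] at h3
  exact dummy_ne_Tfin u v C huv h3

lemma IB_run (u v : M) (y : W) (C : (M → PrefList W) → Matching M W)
    (huv : u ≠ v) (hMu : ∀ m : M, m = u ∨ m = v) (pbar : M → PrefList W) :
    (IB u v y C).run pbar = C pbar := by
  show ((if (pbar u).val.head? = some y then A1mech u v y C else A2mech u v C).run pbar)
      = C pbar
  by_cases h : (pbar u).val.head? = some y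
  · rw [if_pos h]
    show ((if (pbar v).val.head? = some y then Mech.node v (fun _ => Tfin u v C)
        else Tfin u v C).run pbar) = C pbar
    by_cases h2 : (pbar v).val.head? = some y
    · rw [if_pos h2]
      show (Tfin u v C).run pbar = C pbar
      exact Tfin_run u v huv hMu C pbar
    · rw [if_neg h2]
      exact Tfin_run u v huv hMu C pbar
  · rw [if_neg h]
    show (Tfin u v C).run pbar = C pbar
    exact Tfin_run u v huv hMu C pbar

/-- OSP implementation in the opposing-favorites case. -/
lemma caseB_OSP (u v : M) (x y : W) (huv : u ≠ v) (hxy : x ≠ y)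
    (hMu : ∀ m : M, m = u ∨ m = v) (hWu : ∀ w : W, w = x ∨ w = y)
    (qbar : W → PrefList M) (hqx : (qbar x).val = [u, v]) (hqy : (qbar y).val = [v, u])
    (C : (M → PrefList W) → Matching M W)
    (hC : IsMOptimalStableRule qbar C) : OSPImplementable C := by
  have FBu : ∀ p q : PrefList W, (C (prof u p q)).toFun u =
      (if p.val.head? = some x then some x else
       if p.val.head? = some y then
        (if q.val.head? = some y then (if x ∈ p.val then some x else none) else some y)
       else none) :=
    fun p q => (factB u v x y qbar C huv hxy hMu hWu hqx hqy hC p q).1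
  have FBv : ∀ p q : PrefList W, (C (prof u p q)).toFun v =
      (if p.val.head? = some x then (if y ∈ q.val then some y else none)
       else q.val.head?) :=
    fun p q => (factB u v x y qbar C huv hxy hMu hWu hqx hqy hC p q).2
  have hyx : ∀ p : PrefList W, p.val.head? = some y → p.val.head? ≠ some x := by
    intro p hp hc
    rw [hp] at hc
    exact hxy (Option.some.inj hc).symm
  have FBu_nonY : ∀ p q : PrefList W, p.val.head? ≠ some y →
      (C (prof u p q)).toFun u = p.val.head? := by
    intro p q h
    rw [FBu p q]
    by_cases hx : p.val.head? = some x
    · rw [if_pos hx, hx]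
    · rw [if_neg hx, if_neg h]
      cases hh : p.val.head? with
      | none => rfl
      | some c =>
        exfalso
        rcases hWu c with hc | hc
        · exact hx (hh.trans (congrArg some hc))
        · exact h (hh.trans (congrArg some hc))
  have FBu_yy : ∀ p q : PrefList W, p.val.head? = some y → q.val.head? = some y →
      (C (prof u p q)).toFun u = (if x ∈ p.val then some x else none) := by
    intro p q hp hq
    rw [FBu p q, if_neg (hyx p hp), if_pos hp, if_pos hq]
  have FBu_yn : ∀ p q : PrefList W, p.val.head? = some y → q.val.head? ≠ some y →
      (C (prof u p q)).toFun u = some y := by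
    intro p q hp hq
    rw [FBu p q, if_neg (hyx p hp), if_pos hp, if_neg hq]
  have FBu_shape : ∀ p q : PrefList W, p.val.head? ≠ some y →
      (C (prof u p q)).toFun u = some x ∨ (C (prof u p q)).toFun u = none := by
    intro p q h
    rw [FBu_nonY p q h]
    cases hh : p.val.head? with
    | none => exact Or.inr rfl
    | some c =>
      rcases hWu c with hc | hc
      · exact Or.inl (by rw [hc])
      · exact absurd (hh.trans (congrArg some hc)) h
  have spB : ∀ p qq qq' : PrefList W,
      ¬ outPrefers qq ((C (prof u p qq')).toFun v) ((C (prof u p qq)).toFun v) := by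
    intro p qq qq'
    by_cases hx : p.val.head? = some x
    · rw [FBv p qq, FBv p qq', if_pos hx, if_pos hx]
      exact sp_single y qq qq'
    · rw [FBv p qq, FBv p qq', if_neg hx, if_neg hx]
      exact head_best qq _
  have rootA : ∀ pbar pbar' : M → PrefList W,
      ¬(((pbar u).val.head? = some y) ↔ ((pbar' u).val.head? = some y)) →
      ¬ outPrefers (pbar u) ((C (prof u (pbar' u) (pbar' v))).toFun u)
        ((C (prof u (pbar u) (pbar v))).toFun u) := by
    intro pbar pbar' hne
    by_cases h1 : (pbar u).val.head? = some y
    · have h2 : (pbar' u).val.head? ≠ some y := fun h => hne (iff_of_true h1 h)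
      have ho' := FBu_shape (pbar' u) (pbar' v) h2
      by_cases hq : (pbar v).val.head? = some y
      · rw [FBu_yy _ _ h1 hq]
        exact not_out_ifx x _ _ ho'
      · rw [FBu_yn _ _ h1 hq]
        exact not_out_y _ h1 x _ ho'
    · rw [FBu_nonY _ _ h1]
      exact head_best _ _
  have hA1ne := A1_ne_A2 u v y C huv
  have hdune := dummy_ne_Tfin u v C huv
  have extractY : ∀ r : M → PrefList W,
      (if (r u).val.head? = some y then A1mech u v y C else A2mech u v C) = A1mech u v y C →
      (r u).val.head? = some y := by
    intro r h
    by_contra hc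
    rw [if_neg hc] at h
    exact hA1ne h.symm
  have extractNY : ∀ r : M → PrefList W,
      (if (r u).val.head? = some y then A1mech u v y C else A2mech u v C) = A2mech u v C →
      (r u).val.head? ≠ some y := by
    intro r h hc
    rw [if_pos hc] at h
    exact hA1ne h
  have extractYb : ∀ r : M → PrefList W,
      (if (r v).val.head? = some y then Mech.node v (fun _ => Tfin u v C) else Tfin u v C)
        = Mech.node v (fun _ => Tfin u v C) →
      (r v).val.head? = some y := by
    intro r h
    by_contra hc
    rw [if_neg hc] at h
    exact hdune h.symm
  have extractNYb : ∀ r : M → PrefList W,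
      (if (r v).val.head? = some y then Mech.node v (fun _ => Tfin u v C) else Tfin u v C)
        = Tfin u v C →
      (r v).val.head? ≠ some y := by
    intro r h hc
    rw [if_pos hc] at h
    exact hdune h
  have hrun : ∀ r : M → PrefList W,
      ((if (r u).val.head? = some y then A1mech u v y C else A2mech u v C).run r)
        = C (prof u (r u) (r v)) := by
    intro r
    by_cases h : (r u).val.head? = some y
    · rw [if_pos h]
      show ((if (r v).val.head? = some y then Mech.node v (fun _ => Tfin u v C)
          else Tfin u v C).run r) = _
      by_cases h2 : (r v).val.head? = some y
      · rw [if_pos h2]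
        show (Tfin u v C).run r = _
        rw [Tfin_run u v huv hMu, prof_eq huv hMu]
      · rw [if_neg h2]
        rw [Tfin_run u v huv hMu, prof_eq huv hMu]
    · rw [if_neg h]
      show (Tfin u v C).run r = _
      rw [Tfin_run u v huv hMu, prof_eq huv hMu]
  refine ⟨IB u v y C, ?_, fun pbar => IB_run u v y C huv hMu pbar⟩
  intro m
  refine ⟨?_, ?_⟩
  · -- root node, querying u
    intro hum pbar _ pbar' _ hne
    subst hum
    have hcl : ¬(((pbar u).val.head? = some y) ↔ ((pbar' u).val.head? = some y)) := by
      intro hiff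
      apply hne
      show (if (pbar u).val.head? = some y then A1mech u v y C else A2mech u v C)
          = (if (pbar' u).val.head? = some y then A1mech u v y C else A2mech u v C)
      by_cases h : (pbar u).val.head? = some y
      · rw [if_pos h, if_pos (hiff.mp h)]
      · rw [if_neg h, if_neg (fun h' => h (hiff.mpr h'))]
    have hres := rootA pbar pbar' hcl
    rw [← hrun pbar, ← hrun pbar'] at hres
    exact hres
  · intro p
    beta_reduce
    by_cases hp : p.val.head? = some y
    · rw [if_pos hp]
      refine ⟨?_, ?_⟩
      · -- node querying v inside A1mech
        intro hvm pbar hP pbar' hP' _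
        subst hvm
        have hpa : (pbar u).val.head? = some y := extractY pbar hP.2
        have hres : ¬ outPrefers (pbar v) ((C (prof u (pbar' u) (pbar' v))).toFun v)
            ((C (prof u (pbar u) (pbar v))).toFun v) := by
          rw [FBv (pbar u) (pbar v), if_neg (hyx (pbar u) hpa)]
          exact head_best _ _
        have hrun2 : ∀ r : M → PrefList W,
            ((if (r v).val.head? = some y then Mech.node v (fun _ => Tfin u v C)
              else Tfin u v C).run r) = C (prof u (r u) (r v)) := by
          intro r
          by_cases h2 : (r v).val.head? = some y
          · rw [if_pos h2]
            show (Tfin u v C).run r = _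
            rw [Tfin_run u v huv hMu, prof_eq huv hMu]
          · rw [if_neg h2]
            rw [Tfin_run u v huv hMu, prof_eq huv hMu]
        rw [← hrun2 pbar, ← hrun2 pbar'] at hres
        exact hres
      · intro q
        beta_reduce
        by_cases hq : q.val.head? = some y
        · rw [if_pos hq]
          refine ⟨?_, ?_⟩
          · -- dummy node querying v
            intro hvm pbar _ pbar' _ hne'
            exact absurd rfl hne'
          · intro q2
            apply ospT_aux u v C m
            · intro _ pbar hP pbar' hP'
              have hpa : (pbar u).val.head? = some y := extractY pbar hP.1.1.2
              have hpb : (pbar v).val.head? = some y := extractYb pbar hP.1.2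
              have hpa' : (pbar' u).val.head? = some y := extractY pbar' hP'.1.1.2
              have hpb' : (pbar' v).val.head? = some y := extractYb pbar' hP'.1.2
              rw [FBu_yy _ _ hpa hpb, FBu_yy _ _ hpa' hpb']
              apply not_out_ifx x
              by_cases hx : x ∈ (pbar' u).val
              · exact Or.inl (by rw [if_pos hx])
              · exact Or.inr (by rw [if_neg hx])
            · intro _ p' qq qq'
              exact spB p' qq qq'
        · rw [if_neg hq]
          apply ospT_aux u v C m
          · intro _ pbar hP pbar' hP'
            have hpa : (pbar u).val.head? = some y := extractY pbar hP.1.2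
            have hpb : (pbar v).val.head? ≠ some y := extractNYb pbar hP.2
            have hpa' : (pbar' u).val.head? = some y := extractY pbar' hP'.1.2
            have hpb' : (pbar' v).val.head? ≠ some y := extractNYb pbar' hP'.2
            rw [FBu_yn _ _ hpa hpb, FBu_yn _ _ hpa' hpb']
            exact prefers_irrefl (pbar u) y
          · intro _ p' qq qq'
            exact spB p' qq qq'
    · rw [if_neg hp]
      refine ⟨?_, ?_⟩
      · intro hvm pbar _ pbar' _ hne'
        exact absurd rfl hne'
      · intro q
        apply ospT_aux u v C m
        · intro _ pbar hP pbar' hP'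
          have hpa : (pbar u).val.head? ≠ some y := extractNY pbar hP.1.2
          have hpa' : (pbar' u).val.head? ≠ some y := extractNY pbar' hP'.1.2
          rw [FBu_nonY _ _ hpa]
          exact head_best _ _
        · intro _ p' qq qq'
          exact spB p' qq qq'

end CaseB

end OSP2x2

/-- If `|M| = |W| = 2` and every woman's preference list is full, then
for every women's profile `qbar` the M-optimal stable matching rule is
OSP-implementable. -/
theorem mOptimal_OSPImplementable_of_two_by_two
    {M W : Type} [Fintype M] [Fintype W] [DecidableEq M]
    (hM : Fintype.card M = 2) (hW : Fintype.card W = 2)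
    (qbar : W → PrefList M) (hfull : ∀ w : W, IsFull (qbar w))
    (C : (M → PrefList W) → Matching M W)
    (hC : IsMOptimalStableRule qbar C) :
    OSPImplementable C := by
  classical
  obtain ⟨a, b, hab, hMuniv⟩ : ∃ a b : M, a ≠ b ∧ ∀ m : M, m = a ∨ m = b := by
    rw [← Finset.card_univ, Finset.card_eq_two] at hM
    obtain ⟨a, b, hab, huniv⟩ := hM
    refine ⟨a, b, hab, fun m => ?_⟩
    have hm : m ∈ (Finset.univ : Finset M) := Finset.mem_univ m
    rw [huniv] at hm
    simpa using hm
  obtain ⟨x, y, hxy, hWuniv⟩ : ∃ x y : W, x ≠ y ∧ ∀ w : W, w = x ∨ w = y := by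
    rw [← Finset.card_univ, Finset.card_eq_two] at hW
    obtain ⟨x, y, hxy, huniv⟩ := hW
    refine ⟨x, y, hxy, fun w => ?_⟩
    have hw : w ∈ (Finset.univ : Finset W) := Finset.mem_univ w
    rw [huniv] at hw
    simpa using hw
  have hqx2 := OSP2x2.list_two hab hMuniv (qbar x).val (qbar x).2 (hfull x a) (hfull x b)
  have hqy2 := OSP2x2.list_two hab hMuniv (qbar y).val (qbar y).2 (hfull y a) (hfull y b)
  rcases hqx2 with hqx | hqx <;> rcases hqy2 with hqy | hqy
  · exact OSP2x2.dict_OSP a b x y hab hxy hMuniv hWuniv qbar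
      (fun w => by rcases hWuniv w with rfl | rfl <;> assumption) C hC
  · exact OSP2x2.caseB_OSP a b x y hab hxy hMuniv hWuniv qbar hqx hqy C hC
  · exact OSP2x2.caseB_OSP b a x y hab.symm hxy (fun m => (hMuniv m).symm) hWuniv qbar
      hqx hqy C hC
  · exact OSP2x2.dict_OSP b a x y hab.symm hxy (fun m => (hMuniv m).symm) hWuniv qbar
      (fun w => by rcases hWuniv w with rfl | rfl <;> assumption) C hC
end
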